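/- arXiv:1903.05056 — 3 statements merged into one kernel-verified Lean document; each statement's English description precedes it below -/
import Mathlib

section
/- Let σ : [0,S] → [0,S̃] be a strictly increasing, surjective, bi-Lipschitz function and let (S̃, w̃⁰, w̃, α̃, ỹ⁰, ỹ, β̃) be a space-time process. Define (w⁰,w)(s) := ((w̃⁰, w̃) ∘ σ)(s) · σ'(s) and (α, y⁰, y, β) := (α̃, ỹ⁰, ỹ, β̃) ∘ σ. Then (S, w⁰, w, α, y⁰, y, β) is a space-time process; it is feasible if and only if (S̃, w̃⁰, w̃, α̃, ỹ⁰, ỹ, β̃) is feasible; the costs of the two processes coincide; and (S̃, w̃⁰, w̃, α̃, ỹ⁰, ỹ, β̃) is a local (respectively, global) minimizer of the space-time problem if and only if (S, w⁰, w, α, y⁰, y, β) is a local (respectively, global) minimizer. -/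
open MeasureTheory Set Filter Asymptotics Topology
noncomputable section

/-- `ℝ^n` with the Euclidean structure. -/
abbrev Vec (n : ℕ) := EuclideanSpace ℝ (Fin n)

/-- A convex cone (not necessarily containing `0`). -/
def IsConvexCone {E : Type*} [AddCommGroup E] [Module ℝ E] (K : Set E) : Prop :=
  Convex ℝ K ∧ ∀ ⦃c : ℝ⦄, 0 < c → ∀ ⦃x⦄, x ∈ K → c • x ∈ K

/-- `K` is a Boltyanski approximating cone for `Z` at `z`. -/
def IsBoltyanskiCone {E : Type*} [NormedAddCommGroup E] [NormedSpace ℝ E]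
    (Z : Set E) (z : E) (K : Set E) : Prop :=
  IsConvexCone K ∧
  ∃ (M : ℕ) (C : Set (Vec M)) (V : Set (Vec M)) (F : Vec M → E) (L : Vec M →ₗ[ℝ] E),
    IsConvexCone C ∧ V ∈ 𝓝 (0 : Vec M) ∧
    ContinuousOn F (V ∩ C) ∧ (∀ v ∈ V ∩ C, F v ∈ Z) ∧ F 0 = z ∧
    (fun v => F v - F 0 - L v) =o[𝓝[V ∩ C] 0] (fun v => ‖v‖) ∧
    L '' C = K

variable {n m q : ℕ}

/-- The extended (space-time) dynamics
`Fᵉ(x, w⁰, w, a) = w⁰ f(x,a) + Σᵢ wⁱ gᵢ(x)`. -/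
def Fe (f : Vec n → Vec q → Vec n) (g : Fin m → Vec n → Vec n)
    (x : Vec n) (w0 : ℝ) (w : Vec m) (a : Vec q) : Vec n :=
  w0 • f x a + ∑ i, w i • g i x

/-- The extended Lagrangian `ℓᵉ(x, w⁰, w, a) = ℓ₀(x,a) w⁰ + ℓ̂₁(x, w⁰, w)`. -/
def extL (ℓ0 : Vec n → Vec q → ℝ) (ℓhat1 : Vec n → ℝ → Vec m → ℝ)
    (x : Vec n) (w0 : ℝ) (w : Vec m) (a : Vec q) : ℝ :=
  ℓ0 x a * w0 + ℓhat1 x w0 w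

/-- `ℓ̂₁` is the recession function of `ℓ₁`:
`ℓ̂₁(x, w⁰, w) = lim_{r → w⁰, r > 0} r ℓ₁(x, w/r)`. -/
def IsRecessionOf (C : Set (Vec m)) (ℓhat1 : Vec n → ℝ → Vec m → ℝ)
    (ℓ1 : Vec n → Vec m → ℝ) : Prop :=
  ∀ x : Vec n, ∀ w0 : ℝ, 0 ≤ w0 → ∀ w ∈ C,
    Tendsto (fun r : ℝ => r * ℓ1 x (r⁻¹ • w)) (𝓝[Set.Ioi (0:ℝ)] w0) (𝓝 (ℓhat1 x w0 w))

/-- A space-time process of the extended control system. -/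
structure IsSTProcess (C : Set (Vec m)) (A : Set (Vec q))
    (f : Vec n → Vec q → Vec n) (g : Fin m → Vec n → Vec n) (xck : Vec n)
    (S : ℝ) (w0 : ℝ → ℝ) (w : ℝ → Vec m) (α : ℝ → Vec q)
    (y0 : ℝ → ℝ) (y : ℝ → Vec n) (β : ℝ → ℝ) : Prop where
  hS : 0 < S
  meas_w0 : AEMeasurable w0 (volume.restrict (Icc (0:ℝ) S))
  meas_w : AEStronglyMeasurable w (volume.restrict (Icc (0:ℝ) S))
  meas_α : AEStronglyMeasurable α (volume.restrict (Icc (0:ℝ) S))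
  ess_bdd : ∃ M : ℝ, ∀ᵐ s ∂(volume.restrict (Icc (0:ℝ) S)), |w0 s| + ‖w s‖ ≤ M
  mem_ae : ∀ᵐ s ∂(volume.restrict (Icc (0:ℝ) S)), 0 ≤ w0 s ∧ w s ∈ C ∧ α s ∈ A
  essinf_pos : ∃ c : ℝ, 0 < c ∧ ∀ᵐ s ∂(volume.restrict (Icc (0:ℝ) S)), c ≤ w0 s + ‖w s‖
  int_w0 : IntervalIntegrable w0 volume 0 S
  int_F : IntervalIntegrable (fun t => Fe f g (y t) (w0 t) (w t) (α t)) volume 0 S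
  int_w : IntervalIntegrable (fun t => ‖w t‖) volume 0 S
  sol_y0 : ∀ s ∈ Icc (0:ℝ) S, y0 s = ∫ t in (0:ℝ)..s, w0 t
  sol_y : ∀ s ∈ Icc (0:ℝ) S, y s = xck + ∫ t in (0:ℝ)..s, Fe f g (y t) (w0 t) (w t) (α t)
  sol_β : ∀ s ∈ Icc (0:ℝ) S, β s = ∫ t in (0:ℝ)..s, ‖w t‖

/-- Feasibility of a space-time process: final space-time point in the target, and
total variation bounded by `K`. -/
def STFeasible (Tgt : Set (ℝ × Vec n)) (K : EReal)
    (S : ℝ) (y0 : ℝ → ℝ) (y : ℝ → Vec n) (β : ℝ → ℝ) : Prop :=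
  (y0 S, y S) ∈ Tgt ∧ ((β S : ℝ) : EReal) ≤ K

/-- The cost of a space-time process. -/
def STCost (Ψ : ℝ → Vec n → ℝ) (ℓ0 : Vec n → Vec q → ℝ) (ℓhat1 : Vec n → ℝ → Vec m → ℝ)
    (S : ℝ) (w0 : ℝ → ℝ) (w : ℝ → Vec m) (α : ℝ → Vec q)
    (y0 : ℝ → ℝ) (y : ℝ → Vec n) : ℝ :=
  Ψ (y0 S) (y S) + ∫ s in (0:ℝ)..S, extL ℓ0 ℓhat1 (y s) (w0 s) (w s) (α s)

/-- The continuous constant extension of a path on `[0,S]` evaluated at `t`. -/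
def clampT (S t : ℝ) : ℝ := max 0 (min t S)

/-- The distance `d((S₁,z₁),(S₂,z₂)) = |S₁−S₂| + ‖z̃₁−z̃₂‖_∞`, where tildes denote
continuous constant extensions. -/
def dProc {E : Type*} [PseudoMetricSpace E] (S₁ : ℝ) (z₁ : ℝ → E) (S₂ : ℝ) (z₂ : ℝ → E) : ℝ :=
  |S₁ - S₂| + ⨆ t : ℝ, dist (z₁ (clampT S₁ t)) (z₂ (clampT S₂ t))

/-- Local minimizer of the space-time problem. -/
def IsSTLocalMin (C : Set (Vec m)) (A : Set (Vec q))
    (f : Vec n → Vec q → Vec n) (g : Fin m → Vec n → Vec n) (xck : Vec n)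
    (Tgt : Set (ℝ × Vec n)) (K : EReal) (Ψ : ℝ → Vec n → ℝ)
    (ℓ0 : Vec n → Vec q → ℝ) (ℓhat1 : Vec n → ℝ → Vec m → ℝ)
    (S : ℝ) (w0 : ℝ → ℝ) (w : ℝ → Vec m) (α : ℝ → Vec q)
    (y0 : ℝ → ℝ) (y : ℝ → Vec n) (β : ℝ → ℝ) : Prop :=
  IsSTProcess C A f g xck S w0 w α y0 y β ∧ STFeasible Tgt K S y0 y β ∧
  ∃ δ : ℝ, 0 < δ ∧ ∀ (S' : ℝ) (w0' : ℝ → ℝ) (w' : ℝ → Vec m) (α' : ℝ → Vec q)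
      (y0' : ℝ → ℝ) (y' : ℝ → Vec n) (β' : ℝ → ℝ),
    IsSTProcess C A f g xck S' w0' w' α' y0' y' β' →
    STFeasible Tgt K S' y0' y' β' →
    dProc S (fun s => (y0 s, y s, β s)) S' (fun s => (y0' s, y' s, β' s)) < δ →
    STCost Ψ ℓ0 ℓhat1 S w0 w α y0 y ≤ STCost Ψ ℓ0 ℓhat1 S' w0' w' α' y0' y'

/-- Global minimizer of the space-time problem. -/
def IsSTGlobalMin (C : Set (Vec m)) (A : Set (Vec q))
    (f : Vec n → Vec q → Vec n) (g : Fin m → Vec n → Vec n) (xck : Vec n)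
    (Tgt : Set (ℝ × Vec n)) (K : EReal) (Ψ : ℝ → Vec n → ℝ)
    (ℓ0 : Vec n → Vec q → ℝ) (ℓhat1 : Vec n → ℝ → Vec m → ℝ)
    (S : ℝ) (w0 : ℝ → ℝ) (w : ℝ → Vec m) (α : ℝ → Vec q)
    (y0 : ℝ → ℝ) (y : ℝ → Vec n) (β : ℝ → ℝ) : Prop :=
  IsSTProcess C A f g xck S w0 w α y0 y β ∧ STFeasible Tgt K S y0 y β ∧
  ∀ (S' : ℝ) (w0' : ℝ → ℝ) (w' : ℝ → Vec m) (α' : ℝ → Vec q)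
      (y0' : ℝ → ℝ) (y' : ℝ → Vec n) (β' : ℝ → ℝ),
    IsSTProcess C A f g xck S' w0' w' α' y0' y' β' →
    STFeasible Tgt K S' y0' y' β' →
    STCost Ψ ℓ0 ℓhat1 S w0 w α y0 y ≤ STCost Ψ ℓ0 ℓhat1 S' w0' w' α' y0' y'

/-- Canonical process: `w⁰ + |w| = 1` a.e. on `[0,S]`. -/
def STCanonical (S : ℝ) (w0 : ℝ → ℝ) (w : ℝ → Vec m) : Prop :=
  ∀ᵐ s ∂(volume.restrict (Icc (0:ℝ) S)), w0 s + ‖w s‖ = 1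

/-- The unmaximized Hamiltonian `H`. -/
def Ham (f : Vec n → Vec q → Vec n) (g : Fin m → Vec n → Vec n)
    (ℓ0 : Vec n → Vec q → ℝ) (ℓhat1 : Vec n → ℝ → Vec m → ℝ)
    (x : Vec n) (p0 : ℝ) (p : Vec n) (pi lam : ℝ)
    (w0 : ℝ) (w : Vec m) (a : Vec q) : ℝ :=
  p0 * w0 + (inner ℝ p (Fe f g x w0 w a) : ℝ) + pi * ‖w‖
    - lam * extL ℓ0 ℓhat1 x w0 w a

/-- The maximized Hamiltonian `𝐇`, the supremum of `H` over
`W × A = {(w⁰,w) : w⁰ ≥ 0, w ∈ C, w⁰ + |w| = 1} × A`. -/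
def bigH (C : Set (Vec m)) (A : Set (Vec q))
    (f : Vec n → Vec q → Vec n) (g : Fin m → Vec n → Vec n)
    (ℓ0 : Vec n → Vec q → ℝ) (ℓhat1 : Vec n → ℝ → Vec m → ℝ)
    (x : Vec n) (p0 : ℝ) (p : Vec n) (pi lam : ℝ) : ℝ :=
  sSup { h : ℝ | ∃ (w0 : ℝ) (w : Vec m) (a : Vec q),
    0 ≤ w0 ∧ w ∈ C ∧ w0 + ‖w‖ = 1 ∧ a ∈ A ∧
    h = Ham f g ℓ0 ℓhat1 x p0 p pi lam w0 w a }

/-- The polar of a subset of `ℝ × ℝⁿ`. -/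
def polarRN (Γ : Set (ℝ × Vec n)) : Set (ℝ × Vec n) :=
  { p | ∀ z ∈ Γ, p.1 * z.1 + (inner ℝ p.2 z.2 : ℝ) ≤ 0 }

/-- The conditions of the First Order Maximum Principle for a multiplier
`(p₀, p, π, λ)` relative to the approximating cone `Γ` of the target. -/
def FOMP (C : Set (Vec m)) (A : Set (Vec q))
    (f : Vec n → Vec q → Vec n) (g : Fin m → Vec n → Vec n)
    (ℓ0 : Vec n → Vec q → ℝ) (ℓhat1 : Vec n → ℝ → Vec m → ℝ)
    (Ψ : ℝ → Vec n → ℝ) (K : EReal)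
    (S : ℝ) (w0 : ℝ → ℝ) (w : ℝ → Vec m) (α : ℝ → Vec q)
    (y0 : ℝ → ℝ) (y : ℝ → Vec n) (β : ℝ → ℝ)
    (Γ : Set (ℝ × Vec n)) (p0 : ℝ) (p : ℝ → Vec n) (pi lam : ℝ) : Prop :=
  pi ≤ 0 ∧ 0 ≤ lam ∧
  -- (i) non-triviality
  (¬ (p0 = 0 ∧ (∀ s ∈ Icc (0:ℝ) S, p s = 0) ∧ lam = 0)) ∧
  (0 < y0 S → ¬ ((∀ s ∈ Icc (0:ℝ) S, p s = 0) ∧ lam = 0)) ∧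
  -- (ii) non-transversality
  (((β S : ℝ) : EReal) < K → pi = 0) ∧
  (∃ γ ∈ polarRN Γ,
    p0 = -lam * deriv (fun τ => Ψ τ (y S)) (y0 S) - γ.1 ∧
    p S = -lam • gradient (fun ξ => Ψ (y0 S) ξ) (y S) - γ.2) ∧
  -- (iii) adjoint equation (p absolutely continuous with the stated a.e. derivative)
  (∃ pdot : ℝ → Vec n, IntervalIntegrable pdot volume 0 S ∧
    (∀ s ∈ Icc (0:ℝ) S, p s = p 0 + ∫ t in (0:ℝ)..s, pdot t) ∧
    (∀ᵐ s ∂(volume.restrict (Icc (0:ℝ) S)),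
      pdot s = - gradient
        (fun x => Ham f g ℓ0 ℓhat1 x p0 (p s) pi lam (w0 s) (w s) (α s)) (y s))) ∧
  -- (iv) first order maximization
  (∀ᵐ s ∂(volume.restrict (Icc (0:ℝ) S)),
    Ham f g ℓ0 ℓhat1 (y s) p0 (p s) pi lam (w0 s) (w s) (α s)
      = bigH C A f g ℓ0 ℓhat1 (y s) p0 (p s) pi lam) ∧
  -- (v) vanishing of the Hamiltonian
  (∀ s ∈ Icc (0:ℝ) S, bigH C A f g ℓ0 ℓhat1 (y s) p0 (p s) pi lam = 0)

/-- Regularity hypotheses (Hp) (ii)–(v) on the data. -/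
structure HpReg (C : Set (Vec m)) (A : Set (Vec q))
    (f : Vec n → Vec q → Vec n) (g : Fin m → Vec n → Vec n)
    (ℓ0 : Vec n → Vec q → ℝ) (ℓhat1 : Vec n → ℝ → Vec m → ℝ)
    (Ψ : ℝ → Vec n → ℝ) : Prop where
  hf_cont : Continuous (fun z : Vec n × Vec q => f z.1 z.2)
  hf_diff : ∃ Df : Vec n → Vec q → (Vec n →L[ℝ] Vec n),
    Continuous (fun z : Vec n × Vec q => Df z.1 z.2) ∧
    ∀ (x : Vec n) (a : Vec q), HasFDerivAt (fun x => f x a) (Df x a) x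
  hg : ∀ i, ContDiff ℝ 1 (g i)
  hl0_cont : Continuous (fun z : Vec n × Vec q => ℓ0 z.1 z.2)
  hl0_diff : ∃ Dl0 : Vec n → Vec q → Vec n,
    Continuous (fun z : Vec n × Vec q => Dl0 z.1 z.2) ∧
    ∀ (x : Vec n) (a : Vec q), HasGradientAt (fun x => ℓ0 x a) (Dl0 x a) x
  hl1_cont : ContinuousOn (fun z : Vec n × ℝ × Vec m => ℓhat1 z.1 z.2.1 z.2.2)
    (Set.univ ×ˢ (Set.Ici (0:ℝ)) ×ˢ C)
  hl1_diff : ∃ Dl1 : Vec n → ℝ → Vec m → Vec n,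
    ContinuousOn (fun z : Vec n × ℝ × Vec m => Dl1 z.1 z.2.1 z.2.2)
      (Set.univ ×ˢ (Set.Ici (0:ℝ)) ×ˢ C) ∧
    ∀ (x : Vec n) (w0 : ℝ) (w : Vec m), 0 ≤ w0 → w ∈ C →
      HasGradientAt (fun x => ℓhat1 x w0 w) (Dl1 x w0 w) x
  hΨ : ContDiff ℝ 1 (fun z : ℝ × Vec n => Ψ z.1 z.2)

/-- Hypotheses (Hp) (i) on the sets. -/
structure HpSets (C : Set (Vec m)) (A : Set (Vec q)) (Tgt : Set (ℝ × Vec n))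
    (K : EReal) : Prop where
  hTgt_closed : IsClosed Tgt
  hTgt_sub : Tgt ⊆ {z : ℝ × Vec n | 0 ≤ z.1}
  hA : IsCompact A
  hC_closed : IsClosed C
  hC_cone : ∀ ⦃c : ℝ⦄, 0 < c → ∀ ⦃x⦄, x ∈ C → c • x ∈ C
  hK : 0 < K


section AuxHelpers

open MeasureTheory intervalIntegral

lemma clampT_mem {S : ℝ} (hS : 0 ≤ S) (t : ℝ) : clampT S t ∈ Icc (0:ℝ) S :=
  ⟨le_max_left _ _, max_le hS (min_le_right _ _)⟩

lemma clampT_eq_self {S t : ℝ} (ht : t ∈ Icc (0:ℝ) S) : clampT S t = t := by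
  unfold clampT; rw [min_eq_left ht.2, max_eq_right ht.1]

lemma lipschitzWith_clampT (S : ℝ) : LipschitzWith 1 (clampT S) :=
  (LipschitzWith.id.min_const S).const_max 0

lemma lipschitz_image_null {K : NNReal} {F : ℝ → ℝ} (hF : LipschitzWith K F) {s : Set ℝ}
    (hs : volume s = 0) : volume (F '' s) = 0 := by
  have h := hF.hausdorffMeasure_image_le zero_le_one s
  rw [hausdorffMeasure_real] at h
  rw [hs, mul_zero] at h
  exact le_antisymm h zero_le

lemma ae_pullback {S St : ℝ} {σ : ℝ → ℝ} (hmap : MapsTo σ (Icc 0 S) (Icc 0 St))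
    {ginv : ℝ → ℝ} {K : NNReal} (hg : LipschitzWith K ginv)
    (hginv : ∀ s ∈ Icc (0:ℝ) S, ginv (σ s) = s)
    {P : ℝ → Prop} (hP : ∀ᵐ u ∂(volume.restrict (Icc (0:ℝ) St)), P u) :
    ∀ᵐ s ∂(volume.restrict (Icc (0:ℝ) S)), P (σ s) := by
  rw [ae_iff] at hP ⊢
  rw [Measure.restrict_apply' measurableSet_Icc] at hP ⊢
  obtain ⟨B, hBsub, _hBm, hB0⟩ := exists_measurable_superset_of_null hP
  have hsub : {s | ¬ P (σ s)} ∩ Icc 0 S ⊆ ginv '' B := by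
    rintro s ⟨hs, hsI⟩
    exact ⟨σ s, hBsub ⟨hs, hmap hsI⟩, hginv s hsI⟩
  exact measure_mono_null hsub (lipschitz_image_null hg hB0)

/-- Bundle of hypotheses on the reparameterization map. -/
structure RepMap (S St : ℝ) (σ σ' : ℝ → ℝ) : Prop where
  hS : 0 < S
  hSt : 0 < St
  hmono : StrictMonoOn σ (Icc (0:ℝ) S)
  hσ0 : σ 0 = 0
  hσS : σ S = St
  hsurj : σ '' (Icc (0:ℝ) S) = Icc (0:ℝ) St
  hbilip : ∃ c L : ℝ, 0 < c ∧ ∀ s₁ ∈ Icc (0:ℝ) S, ∀ s₂ ∈ Icc (0:ℝ) S,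
      c * |s₁ - s₂| ≤ |σ s₁ - σ s₂| ∧ |σ s₁ - σ s₂| ≤ L * |s₁ - s₂|
  hderiv : ∀ᵐ s ∂(volume.restrict (Icc (0:ℝ) S)), HasDerivAt σ (σ' s) s

namespace RepMap

variable {S St : ℝ} {σ σ' : ℝ → ℝ}

lemma mapsTo (h : RepMap S St σ σ') : MapsTo σ (Icc (0:ℝ) S) (Icc (0:ℝ) St) := fun s hs => by
  rw [← h.hsurj]; exact mem_image_of_mem σ hs

lemma zero_mem (h : RepMap S St σ σ') : (0:ℝ) ∈ Icc (0:ℝ) S := ⟨le_rfl, h.hS.le⟩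

lemma S_mem (h : RepMap S St σ σ') : S ∈ Icc (0:ℝ) S := ⟨h.hS.le, le_rfl⟩

lemma monotoneOn (h : RepMap S St σ σ') : MonotoneOn σ (Icc (0:ℝ) S) := h.hmono.monotoneOn

lemma injOn (h : RepMap S St σ σ') : InjOn σ (Icc (0:ℝ) S) := h.hmono.injOn

end RepMap

/-- The inverse of the reparameterization map (defined via `sInf`, precomposed with a clamp). -/
def repInv (S St : ℝ) (σ : ℝ → ℝ) : ℝ → ℝ :=
  fun u => sInf {s | s ∈ Icc (0:ℝ) S ∧ σ s = clampT St u}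

namespace RepMap

variable {S St : ℝ} {σ σ' : ℝ → ℝ}

lemma inv_spec (h : RepMap S St σ σ') : ∀ u ∈ Icc (0:ℝ) St,
    repInv S St σ u ∈ Icc (0:ℝ) S ∧ σ (repInv S St σ u) = u := by
  intro u hu
  have hcl : clampT St u = u := clampT_eq_self hu
  have : u ∈ σ '' (Icc (0:ℝ) S) := by rw [h.hsurj]; exact hu
  obtain ⟨s, hsI, hs⟩ := this
  have hset : {s' | s' ∈ Icc (0:ℝ) S ∧ σ s' = clampT St u} = {s} := by
    ext s'
    simp only [mem_setOf_eq, mem_singleton_iff]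
    constructor
    · rintro ⟨hs'I, hs'⟩
      exact h.injOn hs'I hsI (by rw [hs', hcl, hs])
    · rintro rfl; exact ⟨hsI, by rw [hcl, hs]⟩
  rw [repInv, hset, csInf_singleton]
  exact ⟨hsI, hs⟩

lemma inv_comp (h : RepMap S St σ σ') : ∀ s ∈ Icc (0:ℝ) S, repInv S St σ (σ s) = s := by
  intro s hs
  have h1 := h.inv_spec (σ s) (h.mapsTo hs)
  exact h.injOn h1.1 hs h1.2

lemma inv_clamp (h : RepMap S St σ σ') (u : ℝ) :
    repInv S St σ u = repInv S St σ (clampT St u) := by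
  unfold repInv
  rw [clampT_eq_self (clampT_mem h.hSt.le u)]

lemma exists_consts (h : RepMap S St σ σ') : ∃ c L : ℝ, 0 < c ∧ 0 < L ∧ c ≤ L ∧
    ∀ s₁ ∈ Icc (0:ℝ) S, ∀ s₂ ∈ Icc (0:ℝ) S,
      c * |s₁ - s₂| ≤ |σ s₁ - σ s₂| ∧ |σ s₁ - σ s₂| ≤ L * |s₁ - s₂| := by
  obtain ⟨c, L, hc, hb⟩ := h.hbilip
  have h1 := hb 0 h.zero_mem S h.S_mem
  have h2 : |σ 0 - σ S| = St := by
    rw [h.hσ0, h.hσS, zero_sub, abs_neg, abs_of_pos h.hSt]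
  have h3 : |(0:ℝ) - S| = S := by rw [zero_sub, abs_neg, abs_of_pos h.hS]
  have hcL : c ≤ L := by
    nlinarith [h1.1, h1.2, h.hS, h.hSt]
  have hL : 0 < L := lt_of_lt_of_le hc hcL
  exact ⟨c, L, hc, hL, hcL, hb⟩

lemma inv_lipschitz (h : RepMap S St σ σ') :
    ∃ K : NNReal, LipschitzWith K (repInv S St σ) := by
  obtain ⟨c, L, hc, _hL, _hcL, hb⟩ := h.exists_consts
  refine ⟨(c⁻¹).toNNReal, LipschitzWith.of_dist_le_mul fun u₁ u₂ => ?_⟩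
  have hcoe : ((c⁻¹).toNNReal : ℝ) = c⁻¹ := Real.coe_toNNReal _ (inv_nonneg.2 hc.le)
  rw [hcoe]
  have hv₁ : clampT St u₁ ∈ Icc (0:ℝ) St := clampT_mem h.hSt.le u₁
  have hv₂ : clampT St u₂ ∈ Icc (0:ℝ) St := clampT_mem h.hSt.le u₂
  obtain ⟨hg₁, hσg₁⟩ := h.inv_spec _ hv₁
  obtain ⟨hg₂, hσg₂⟩ := h.inv_spec _ hv₂
  rw [h.inv_clamp u₁, h.inv_clamp u₂]
  have key := (hb _ hg₁ _ hg₂).1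
  rw [hσg₁, hσg₂] at key
  have hcl : dist (clampT St u₁) (clampT St u₂) ≤ dist u₁ u₂ := by
    simpa using (lipschitzWith_clampT St).dist_le_mul u₁ u₂
  simp only [Real.dist_eq] at hcl ⊢
  rw [← div_eq_inv_mul, le_div_iff₀ hc, mul_comm]
  exact key.trans hcl

lemma clamp_lipschitz (h : RepMap S St σ σ') :
    ∃ K : NNReal, LipschitzWith K (fun t => σ (clampT S t)) := by
  obtain ⟨c, L, _hc, hL, _hcL, hb⟩ := h.exists_consts
  refine ⟨L.toNNReal, LipschitzWith.of_dist_le_mul fun u₁ u₂ => ?_⟩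
  have hcoe : (L.toNNReal : ℝ) = L := Real.coe_toNNReal _ hL.le
  rw [hcoe]
  have key := (hb _ (clampT_mem h.hS.le u₁) _ (clampT_mem h.hS.le u₂)).2
  have hcl : dist (clampT S u₁) (clampT S u₂) ≤ dist u₁ u₂ := by
    simpa using (lipschitzWith_clampT S).dist_le_mul u₁ u₂
  simp only [Real.dist_eq] at hcl ⊢
  calc |σ (clampT S u₁) - σ (clampT S u₂)| ≤ L * |clampT S u₁ - clampT S u₂| := key
  _ ≤ L * |u₁ - u₂| := mul_le_mul_of_nonneg_left hcl hL.le

lemma continuousOn (h : RepMap S St σ σ') : ContinuousOn σ (Icc (0:ℝ) S) := by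
  obtain ⟨K, hK⟩ := h.clamp_lipschitz
  exact hK.continuous.continuousOn.congr fun t ht => by beta_reduce; rw [clampT_eq_self ht]

lemma ae_Ioo (h : RepMap S St σ σ') :
    ∀ᵐ s ∂(volume.restrict (Icc (0:ℝ) S)), s ∈ Ioo (0:ℝ) S := by
  rw [ae_iff, Measure.restrict_apply' measurableSet_Icc]
  have hsub : {s | ¬ s ∈ Ioo (0:ℝ) S} ∩ Icc (0:ℝ) S ⊆ ({0} ∪ {S} : Set ℝ) := by
    rintro s ⟨hs1, hs2⟩
    rcases eq_or_lt_of_le hs2.1 with h0 | h0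
    · exact Or.inl h0.symm
    rcases eq_or_lt_of_le hs2.2 with hS | hS
    · exact Or.inr hS
    · exact absurd ⟨h0, hS⟩ hs1
  exact measure_mono_null hsub
    (measure_union_null (measure_singleton _) (measure_singleton _))

lemma deriv_bounds (h : RepMap S St σ σ') : ∃ c L : ℝ, 0 < c ∧ 0 < L ∧ c ≤ L ∧
    ∀ᵐ s ∂(volume.restrict (Icc (0:ℝ) S)), c ≤ σ' s ∧ σ' s ≤ L := by
  obtain ⟨c, L, hc, hL, hcL, hb⟩ := h.exists_consts
  refine ⟨c, L, hc, hL, hcL, ?_⟩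
  filter_upwards [h.hderiv, h.ae_Ioo] with s hd hio
  have hslope : Tendsto (slope σ s) (𝓝[Ioo s S] s) (𝓝 (σ' s)) :=
    (hasDerivAt_iff_tendsto_slope.1 hd).mono_left
      (nhdsWithin_mono s (fun t ht => ne_of_gt ht.1))
  have hne : (𝓝[Ioo s S] s).NeBot := by
    rw [← mem_closure_iff_nhdsWithin_neBot, closure_Ioo hio.2.ne]
    exact ⟨le_rfl, hio.2.le⟩
  have hmemIcc : s ∈ Icc (0:ℝ) S := ⟨hio.1.le, hio.2.le⟩
  have hev : ∀ t ∈ Ioo s S, c ≤ slope σ s t ∧ slope σ s t ≤ L := by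
    intro t ht
    have htIcc : t ∈ Icc (0:ℝ) S := ⟨(hio.1.trans ht.1).le, ht.2.le⟩
    have hts : 0 < t - s := by linarith [ht.1]
    have hmono : σ s ≤ σ t := h.monotoneOn hmemIcc htIcc ht.1.le
    have habs : |σ t - σ s| = σ t - σ s := abs_of_nonneg (by linarith)
    have hb1 := (hb t htIcc s hmemIcc).1
    have hb2 := (hb t htIcc s hmemIcc).2
    rw [habs, abs_of_pos hts] at hb1 hb2
    have hslope_eq : slope σ s t = (σ t - σ s) / (t - s) := by
      rw [slope_def_field]
    constructor
    · rw [hslope_eq, le_div_iff₀ hts]; linarith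
    · rw [hslope_eq, div_le_iff₀ hts]; linarith
  constructor
  · exact ge_of_tendsto hslope (eventually_nhdsWithin_of_forall fun t ht => (hev t ht).1)
  · exact le_of_tendsto hslope (eventually_nhdsWithin_of_forall fun t ht => (hev t ht).2)

lemma deriv_aemeasurable (h : RepMap S St σ σ') :
    AEMeasurable σ' (volume.restrict (Icc (0:ℝ) S)) := by
  have key : ∀ᵐ s ∂(volume.restrict (Icc (0:ℝ) S)), σ' s = deriv (fun t => σ (clampT S t)) s := by
    filter_upwards [h.hderiv, h.ae_Ioo] with s hd hio
    have hev : (fun t => σ (clampT S t)) =ᶠ[𝓝 s] σ := by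
      filter_upwards [isOpen_Ioo.mem_nhds hio] with t ht
      rw [clampT_eq_self ⟨ht.1.le, ht.2.le⟩]
    exact ((hd.congr_of_eventuallyEq hev).deriv).symm
  have key' : (fun s => deriv (fun t => σ (clampT S t)) s)
      =ᵐ[volume.restrict (Icc (0:ℝ) S)] σ' := by
    filter_upwards [key] with s hs; exact hs.symm
  exact (measurable_deriv _).aemeasurable.congr key' 

lemma pullback (h : RepMap S St σ σ') {P : ℝ → Prop}
    (hP : ∀ᵐ u ∂(volume.restrict (Icc (0:ℝ) St)), P u) :
    ∀ᵐ s ∂(volume.restrict (Icc (0:ℝ) S)), P (σ s) := by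
  obtain ⟨K, hK⟩ := h.inv_lipschitz
  exact ae_pullback h.mapsTo hK h.inv_comp hP

lemma cov_core (h : RepMap S St σ σ') {s : ℝ} (hs : s ∈ Icc (0:ℝ) S) :
    ∃ E : Set ℝ, MeasurableSet E ∧ E ⊆ Icc (0:ℝ) S ∧
      (∀ t ∈ E, HasDerivWithinAt σ (σ' t) E t) ∧ InjOn σ E ∧
      (Ioc (0:ℝ) s : Set ℝ) =ᵐ[volume] E ∧ (σ '' E) =ᵐ[volume] Ioc (0:ℝ) (σ s) := by
  have hae := h.hderiv
  rw [ae_iff, Measure.restrict_apply' measurableSet_Icc] at hae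
  obtain ⟨N, hNsub, hNm, hN0⟩ := exists_measurable_superset_of_null hae
  have hIocIcc : Ioc (0:ℝ) s ⊆ Icc (0:ℝ) S := fun t ht => ⟨ht.1.le, ht.2.trans hs.2⟩
  have hEsub : Ioc (0:ℝ) s \ N ⊆ Icc (0:ℝ) S := fun t ht => hIocIcc ht.1
  refine ⟨Ioc 0 s \ N, measurableSet_Ioc.diff hNm, hEsub, ?_, h.injOn.mono hEsub, ?_, ?_⟩
  · intro t ht
    have hDA : HasDerivAt σ (σ' t) t := by
      by_contra hcon
      exact ht.2 (hNsub ⟨hcon, hEsub ht⟩)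
    exact hDA.hasDerivWithinAt
  · rw [eventuallyEq_set]
    have h1 : volume {x | ¬ (x ∈ Ioc (0:ℝ) s ↔ x ∈ Ioc (0:ℝ) s \ N)} = 0 := by
      refine measure_mono_null (fun x hx => ?_) hN0
      simp only [mem_setOf_eq, mem_diff] at hx
      by_contra hxN
      exact hx ⟨fun h2 => ⟨h2, hxN⟩, fun h2 => h2.1⟩
    rw [ae_iff]
    exact h1
  · have hmapsto := h.mapsTo
    have hσs := (hmapsto hs)
    have hfwd : σ '' (Ioc 0 s \ N) ⊆ Ioc (0:ℝ) (σ s) := by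
      rintro x ⟨t, ht, rfl⟩
      have htI := hEsub ht
      constructor
      · have := h.hmono h.zero_mem htI ht.1.1
        rwa [h.hσ0] at this
      · exact h.monotoneOn htI hs ht.1.2
    have hback : Ioc (0:ℝ) (σ s) \ σ '' (Ioc 0 s \ N) ⊆
        (fun t => σ (clampT S t)) '' (N ∩ Icc (0:ℝ) S) := by
      rintro x ⟨hx1, hx2⟩
      have hcont : ContinuousOn σ (Icc 0 s) :=
        h.continuousOn.mono (Icc_subset_Icc le_rfl hs.2)
      have hivt : Icc (σ 0) (σ s) ⊆ σ '' (Icc 0 s) := intermediate_value_Icc hs.1 hcont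
      have hx3 : x ∈ σ '' Icc 0 s := hivt (by rw [h.hσ0]; exact ⟨hx1.1.le, hx1.2⟩)
      obtain ⟨t, htI, rfl⟩ := hx3
      have ht0 : 0 < t := by
        rcases eq_or_lt_of_le htI.1 with h0 | h0
        · exfalso; rw [← h0, h.hσ0] at hx1; exact lt_irrefl _ hx1.1
        · exact h0
      have htN : t ∈ N := by
        by_contra htN
        exact hx2 ⟨t, ⟨⟨ht0, htI.2⟩, htN⟩, rfl⟩
      have htIcc : t ∈ Icc (0:ℝ) S := ⟨htI.1, htI.2.trans hs.2⟩
      exact ⟨t, ⟨htN, htIcc⟩, by simp only [clampT_eq_self htIcc]⟩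
    have himnull : volume ((fun t => σ (clampT S t)) '' (N ∩ Icc (0:ℝ) S)) = 0 := by
      obtain ⟨K, hK⟩ := h.clamp_lipschitz
      exact lipschitz_image_null hK (measure_mono_null inter_subset_left hN0)
    rw [MeasureTheory.ae_eq_set]
    constructor
    · rw [diff_eq_empty.2 hfwd]; exact measure_empty
    · exact measure_mono_null hback himnull

lemma sigma_nonneg (h : RepMap S St σ σ') {s : ℝ} (hs : s ∈ Icc (0:ℝ) S) : 0 ≤ σ s :=
  (h.mapsTo hs).1

lemma cov_eq (h : RepMap S St σ σ') {X : Type*} [NormedAddCommGroup X] [NormedSpace ℝ X]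
    [CompleteSpace X] (φ : ℝ → X) {s : ℝ} (hs : s ∈ Icc (0:ℝ) S) :
    ∫ t in (0:ℝ)..(σ s), φ t = ∫ t in (0:ℝ)..s, σ' t • φ (σ t) := by
  obtain ⟨E, hEm, hEsub, hEd, hEinj, hE1, hE2⟩ := h.cov_core hs
  obtain ⟨c, L, hc, _hL, _hcL, hbd⟩ := h.deriv_bounds
  have habs : ∀ᵐ t ∂volume, t ∈ E → σ' t • φ (σ t) = |σ' t| • φ (σ t) := by
    filter_upwards [ae_imp_of_ae_restrict (s := Icc (0:ℝ) S) hbd] with t ht htE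
    rw [abs_of_pos (lt_of_lt_of_le hc (ht (hEsub htE)).1)]
  rw [intervalIntegral.integral_of_le (h.sigma_nonneg hs),
    intervalIntegral.integral_of_le hs.1,
    ← MeasureTheory.setIntegral_congr_set hE2,
    integral_image_eq_integral_abs_deriv_smul hEm hEd hEinj,
    MeasureTheory.setIntegral_congr_set hE1,
    MeasureTheory.setIntegral_congr_ae hEm habs]

lemma cov_int (h : RepMap S St σ σ') {X : Type*} [NormedAddCommGroup X] [NormedSpace ℝ X]
    (φ : ℝ → X) (hφ : IntegrableOn φ (Ioc (0:ℝ) St)) :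
    IntegrableOn (fun t => σ' t • φ (σ t)) (Ioc (0:ℝ) S) := by
  obtain ⟨E, hEm, hEsub, hEd, hEinj, hE1, hE2⟩ := h.cov_core h.S_mem
  obtain ⟨c, L, hc, _hL, _hcL, hbd⟩ := h.deriv_bounds
  rw [h.hσS] at hE2
  have h1 : IntegrableOn φ (σ '' E) := by
    rw [IntegrableOn, Measure.restrict_congr_set hE2]; exact hφ
  have h2 := (integrableOn_image_iff_integrableOn_abs_deriv_smul hEm hEd hEinj φ).1 h1
  have h3 : IntegrableOn (fun t => σ' t • φ (σ t)) E := by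
    refine h2.congr ?_
    have := ae_restrict_of_ae_restrict_of_subset hEsub hbd
    filter_upwards [this] with t ht
    rw [abs_of_pos (lt_of_lt_of_le hc ht.1)]
  rw [IntegrableOn, Measure.restrict_congr_set hE1.symm] at h3
  exact h3

lemma comp_aestronglyMeasurable (h : RepMap S St σ σ') {X : Type*} [TopologicalSpace X]
    [TopologicalSpace.PseudoMetrizableSpace X] {φ : ℝ → X}
    (hφ : AEStronglyMeasurable φ (volume.restrict (Icc (0:ℝ) St))) :
    AEStronglyMeasurable (fun s => φ (σ s)) (volume.restrict (Icc (0:ℝ) S)) := by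
  obtain ⟨ψ, hψm, hψe⟩ := hφ
  obtain ⟨K, hK⟩ := h.clamp_lipschitz
  refine ⟨fun s => ψ (σ (clampT S s)),
    hψm.comp_measurable hK.continuous.measurable, ?_⟩
  have h1 : ∀ᵐ s ∂(volume.restrict (Icc (0:ℝ) S)), φ (σ s) = ψ (σ s) := h.pullback hψe
  filter_upwards [h1, ae_restrict_mem measurableSet_Icc] with s hs1 hs2
  rw [hs1, clampT_eq_self hs2]

lemma comp_aemeasurable (h : RepMap S St σ σ') {φ : ℝ → ℝ}
    (hφ : AEMeasurable φ (volume.restrict (Icc (0:ℝ) St))) :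
    AEMeasurable (fun s => φ (σ s)) (volume.restrict (Icc (0:ℝ) S)) := by
  obtain ⟨ψ, hψm, hψe⟩ := hφ
  obtain ⟨K, hK⟩ := h.clamp_lipschitz
  refine ⟨fun s => ψ (σ (clampT S s)), hψm.comp hK.continuous.measurable, ?_⟩
  have h1 : ∀ᵐ s ∂(volume.restrict (Icc (0:ℝ) S)), φ (σ s) = ψ (σ s) := h.pullback hψe
  filter_upwards [h1, ae_restrict_mem measurableSet_Icc] with s hs1 hs2
  rw [hs1, clampT_eq_self hs2]

end RepMap

lemma tendsto_rescale {r a : ℝ} (hr : 0 < r) :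
    Tendsto (fun t : ℝ => r * t) (𝓝[Set.Ioi (0:ℝ)] a) (𝓝[Set.Ioi (0:ℝ)] (r * a)) := by
  apply tendsto_nhdsWithin_of_tendsto_nhds_of_eventually_within
  · exact ((continuous_const.mul continuous_id).tendsto a).mono_left nhdsWithin_le_nhds
  · exact eventually_nhdsWithin_of_forall fun t ht => mul_pos hr ht

/-- Positive homogeneity of the recession function. -/
lemma lhat_homog {m n : ℕ} {C : Set (Vec m)} {ℓ1 : Vec n → Vec m → ℝ}
    {ℓhat1 : Vec n → ℝ → Vec m → ℝ}
    (hC_cone : ∀ ⦃c : ℝ⦄, 0 < c → ∀ ⦃x : Vec m⦄, x ∈ C → c • x ∈ C)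
    (hrec : IsRecessionOf C ℓhat1 ℓ1)
    (x : Vec n) {w0 r : ℝ} {w : Vec m} (hw0 : 0 ≤ w0) (hw : w ∈ C) (hr : 0 < r) :
    ℓhat1 x (r * w0) (r • w) = r * ℓhat1 x w0 w := by
  have T1 := hrec x (r * w0) (by positivity) (r • w) (hC_cone hr hw)
  have T2 := hrec x w0 hw0 w hw
  have T3 : Tendsto (fun t : ℝ => r * (t * ℓ1 x (t⁻¹ • w))) (𝓝[Set.Ioi (0:ℝ)] w0)
      (𝓝 (r * ℓhat1 x w0 w)) := T2.const_mul r
  have T4 : Tendsto (fun t : ℝ => (r * t) * ℓ1 x ((r * t)⁻¹ • (r • w))) (𝓝[Set.Ioi (0:ℝ)] w0)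
      (𝓝 (r * ℓhat1 x w0 w)) := by
    refine T3.congr' ?_
    filter_upwards [self_mem_nhdsWithin] with t ht
    have ht0 : (0:ℝ) < t := ht
    have hsm : (r * t)⁻¹ • (r • w) = t⁻¹ • w := by
      rw [smul_smul, mul_inv, mul_comm r⁻¹ t⁻¹, mul_assoc, inv_mul_cancel₀ hr.ne']
      rw [mul_one]
    rw [hsm]; ring
  have hm' : Tendsto (fun ρ : ℝ => r⁻¹ * ρ) (𝓝[Set.Ioi (0:ℝ)] (r * w0))
      (𝓝[Set.Ioi (0:ℝ)] (r⁻¹ * (r * w0))) := tendsto_rescale (inv_pos.2 hr)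
  rw [inv_mul_cancel_left₀ hr.ne'] at hm'
  have T5 : Tendsto (fun ρ : ℝ => ρ * ℓ1 x (ρ⁻¹ • (r • w))) (𝓝[Set.Ioi (0:ℝ)] (r * w0))
      (𝓝 (r * ℓhat1 x w0 w)) := by
    have hcomp := T4.comp hm'
    refine hcomp.congr fun ρ => ?_
    simp only [Function.comp]
    rw [mul_inv_cancel_left₀ hr.ne']
  have hne : (𝓝[Set.Ioi (0:ℝ)] (r * w0)).NeBot := by
    rw [← mem_closure_iff_nhdsWithin_neBot, closure_Ioi]
    exact mul_nonneg hr.le hw0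
  exact tendsto_nhds_unique T1 T5

lemma Fe_smul {n m q : ℕ} (f : Vec n → Vec q → Vec n) (g : Fin m → Vec n → Vec n)
    (x : Vec n) (w0 : ℝ) (w : Vec m) (a : Vec q) (r : ℝ) :
    Fe f g x (w0 * r) (r • w) a = r • Fe f g x w0 w a := by
  unfold Fe
  rw [smul_add, Finset.smul_sum]
  congr 1
  · rw [smul_smul, mul_comm]
  · refine Finset.sum_congr rfl fun i _ => ?_
    have hsm : (r • w) i = r * w i := rfl
    rw [hsm, smul_smul]

lemma extL_smul {m n q : ℕ} {C : Set (Vec m)} {ℓ0 : Vec n → Vec q → ℝ}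
    {ℓ1 : Vec n → Vec m → ℝ} {ℓhat1 : Vec n → ℝ → Vec m → ℝ}
    (hC_cone : ∀ ⦃c : ℝ⦄, 0 < c → ∀ ⦃x : Vec m⦄, x ∈ C → c • x ∈ C)
    (hrec : IsRecessionOf C ℓhat1 ℓ1)
    (x : Vec n) {w0 r : ℝ} {w : Vec m} (a : Vec q)
    (hw0 : 0 ≤ w0) (hw : w ∈ C) (hr : 0 < r) :
    extL ℓ0 ℓhat1 x (w0 * r) (r • w) a = r * extL ℓ0 ℓhat1 x w0 w a := by
  unfold extL
  rw [mul_comm w0 r, lhat_homog hC_cone hrec x hw0 hw hr]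
  ring

namespace RepMap

variable {S St : ℝ} {σ σ' : ℝ → ℝ}

lemma inv_strictMonoOn (h : RepMap S St σ σ') :
    StrictMonoOn (repInv S St σ) (Icc (0:ℝ) St) := by
  intro u₁ hu₁ u₂ hu₂ hlt
  by_contra hcon
  push_neg at hcon
  have h1 := h.inv_spec u₁ hu₁
  have h2 := h.inv_spec u₂ hu₂
  have hm := h.monotoneOn h2.1 h1.1 hcon
  rw [h1.2, h2.2] at hm
  exact absurd hlt (not_lt.2 hm)

lemma inv_zero (h : RepMap S St σ σ') : repInv S St σ 0 = 0 := by
  have h1 := h.inv_spec 0 ⟨le_rfl, h.hSt.le⟩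
  apply h.injOn h1.1 h.zero_mem
  rw [h1.2, h.hσ0]

lemma inv_end (h : RepMap S St σ σ') : repInv S St σ St = S := by
  have h1 := h.inv_spec St ⟨h.hSt.le, le_rfl⟩
  apply h.injOn h1.1 h.S_mem
  rw [h1.2, h.hσS]

lemma inv_surj (h : RepMap S St σ σ') :
    repInv S St σ '' (Icc (0:ℝ) St) = Icc (0:ℝ) S := by
  apply Subset.antisymm
  · rintro x ⟨u, hu, rfl⟩; exact (h.inv_spec u hu).1
  · intro s hs
    exact ⟨σ s, h.mapsTo hs, h.inv_comp s hs⟩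

lemma inv_bilip (h : RepMap S St σ σ') : ∃ c L : ℝ, 0 < c ∧
    ∀ u₁ ∈ Icc (0:ℝ) St, ∀ u₂ ∈ Icc (0:ℝ) St,
      c * |u₁ - u₂| ≤ |repInv S St σ u₁ - repInv S St σ u₂| ∧
      |repInv S St σ u₁ - repInv S St σ u₂| ≤ L * |u₁ - u₂| := by
  obtain ⟨c, L, hc, hL, _hcL, hb⟩ := h.exists_consts
  refine ⟨L⁻¹, c⁻¹, inv_pos.2 hL, fun u₁ hu₁ u₂ hu₂ => ?_⟩
  obtain ⟨hg₁, hσ₁⟩ := h.inv_spec u₁ hu₁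
  obtain ⟨hg₂, hσ₂⟩ := h.inv_spec u₂ hu₂
  have hb' := hb _ hg₁ _ hg₂
  rw [hσ₁, hσ₂] at hb'
  constructor
  · rw [inv_mul_le_iff₀ hL]; exact hb'.2
  · rw [le_inv_mul_iff₀ hc]; exact hb'.1

lemma inv_deriv_ae (h : RepMap S St σ σ') :
    ∀ᵐ u ∂(volume.restrict (Icc (0:ℝ) St)),
      HasDerivAt (repInv S St σ) (deriv (repInv S St σ) u) u := by
  obtain ⟨K, hK⟩ := h.inv_lipschitz
  refine ae_restrict_of_ae ?_
  filter_upwards [hK.ae_differentiableAt (μ := volume)] with u hu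
  exact hu.hasDerivAt

lemma inv_repmap (h : RepMap S St σ σ') :
    RepMap St S (repInv S St σ) (deriv (repInv S St σ)) :=
  ⟨h.hSt, h.hS, h.inv_strictMonoOn, h.inv_zero, h.inv_end, h.inv_surj,
    h.inv_bilip, h.inv_deriv_ae⟩

end RepMap

end AuxHelpers



section Reparam

open MeasureTheory intervalIntegral

variable {n m q : ℕ} {C : Set (Vec m)} {A : Set (Vec q)}
  {f : Vec n → Vec q → Vec n} {g : Fin m → Vec n → Vec n} {xck : Vec n}
  {St : ℝ} {w0t : ℝ → ℝ} {wt : ℝ → Vec m} {αt : ℝ → Vec q}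
  {y0t : ℝ → ℝ} {yt : ℝ → Vec n} {βt : ℝ → ℝ}
  {S : ℝ} {σ σ' : ℝ → ℝ}

lemma reparam_process
    (hC_cone : ∀ ⦃c : ℝ⦄, 0 < c → ∀ ⦃x : Vec m⦄, x ∈ C → c • x ∈ C)
    (hproc : IsSTProcess C A f g xck St w0t wt αt y0t yt βt)
    (h : RepMap S St σ σ') :
    IsSTProcess C A f g xck S (fun s => w0t (σ s) * σ' s) (fun s => σ' s • wt (σ s))
      (fun s => αt (σ s)) (fun s => y0t (σ s)) (fun s => yt (σ s)) (fun s => βt (σ s)) := by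
  obtain ⟨c, L, hc, hL, hcL, hbd⟩ := h.deriv_bounds
  have hSt0 : (0:ℝ) ≤ St := h.hSt.le
  have hS0 : (0:ℝ) ≤ S := h.hS.le
  refine IsSTProcess.mk h.hS
    ((h.comp_aemeasurable hproc.meas_w0).mul h.deriv_aemeasurable)
    (h.deriv_aemeasurable.aestronglyMeasurable.smul
      (h.comp_aestronglyMeasurable hproc.meas_w))
    (h.comp_aestronglyMeasurable hproc.meas_α)
    ?_ ?_ ?_ ?_ ?_ ?_ ?_ ?_ ?_
  · obtain ⟨M, hM⟩ := hproc.ess_bdd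
    refine ⟨L * max M 0, ?_⟩
    filter_upwards [h.pullback hM, hbd] with s h1 h2
    have hσ0 : 0 ≤ σ' s := le_trans hc.le h2.1
    have e1 : |w0t (σ s) * σ' s| = |w0t (σ s)| * σ' s := by
      rw [abs_mul, abs_of_nonneg hσ0]
    have e2 : ‖σ' s • wt (σ s)‖ = σ' s * ‖wt (σ s)‖ := by
      rw [norm_smul, Real.norm_eq_abs, abs_of_nonneg hσ0]
    rw [e1, e2, show |w0t (σ s)| * σ' s + σ' s * ‖wt (σ s)‖
      = σ' s * (|w0t (σ s)| + ‖wt (σ s)‖) by ring]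
    exact mul_le_mul h2.2 (h1.trans (le_max_left _ _)) (by positivity) hL.le
  · filter_upwards [h.pullback hproc.mem_ae, hbd] with s h1 h2
    have hσpos : 0 < σ' s := lt_of_lt_of_le hc h2.1
    exact ⟨mul_nonneg h1.1 hσpos.le, hC_cone hσpos h1.2.1, h1.2.2⟩
  · obtain ⟨c0, hc0, hae⟩ := hproc.essinf_pos
    refine ⟨c * c0, mul_pos hc hc0, ?_⟩
    filter_upwards [h.pullback hae, hbd] with s h1 h2
    have hσ0 : 0 ≤ σ' s := hc.le.trans h2.1
    have e2 : ‖σ' s • wt (σ s)‖ = σ' s * ‖wt (σ s)‖ := by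
      rw [norm_smul, Real.norm_eq_abs, abs_of_nonneg hσ0]
    rw [e2, show w0t (σ s) * σ' s + σ' s * ‖wt (σ s)‖
      = σ' s * (w0t (σ s) + ‖wt (σ s)‖) by ring]
    exact mul_le_mul h2.1 h1 hc0.le hσ0
  · have h0 := (intervalIntegrable_iff_integrableOn_Ioc_of_le hSt0).1 hproc.int_w0
    have h1 := h.cov_int w0t h0
    refine (intervalIntegrable_iff_integrableOn_Ioc_of_le hS0).2 (h1.congr ?_)
    exact Filter.Eventually.of_forall fun t =>
      show σ' t • w0t (σ t) = w0t (σ t) * σ' t by rw [smul_eq_mul, mul_comm]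
  · have h0 := (intervalIntegrable_iff_integrableOn_Ioc_of_le hSt0).1 hproc.int_F
    have h1 := h.cov_int (fun u => Fe f g (yt u) (w0t u) (wt u) (αt u)) h0
    refine (intervalIntegrable_iff_integrableOn_Ioc_of_le hS0).2 (h1.congr ?_)
    exact Filter.Eventually.of_forall fun t => (Fe_smul f g _ _ _ _ _).symm
  · have h0 := (intervalIntegrable_iff_integrableOn_Ioc_of_le hSt0).1 hproc.int_w
    have h1 := h.cov_int (fun u => ‖wt u‖) h0
    refine (intervalIntegrable_iff_integrableOn_Ioc_of_le hS0).2 (h1.congr ?_)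
    filter_upwards [ae_restrict_of_ae_restrict_of_subset Ioc_subset_Icc_self hbd] with t ht
    rw [norm_smul, Real.norm_eq_abs, abs_of_nonneg (hc.le.trans ht.1), smul_eq_mul]
  · intro s hs
    rw [hproc.sol_y0 (σ s) (h.mapsTo hs), h.cov_eq w0t hs]
    exact intervalIntegral.integral_congr fun t _ =>
      show σ' t • w0t (σ t) = w0t (σ t) * σ' t by rw [smul_eq_mul, mul_comm]
  · intro s hs
    rw [hproc.sol_y (σ s) (h.mapsTo hs),
      h.cov_eq (fun u => Fe f g (yt u) (w0t u) (wt u) (αt u)) hs]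
    congr 1
    exact intervalIntegral.integral_congr fun t _ => (Fe_smul f g _ _ _ _ _).symm
  · intro s hs
    rw [hproc.sol_β (σ s) (h.mapsTo hs), h.cov_eq (fun u => ‖wt u‖) hs]
    refine intervalIntegral.integral_congr_ae ?_
    filter_upwards [ae_imp_of_ae_restrict hbd] with t h1 htmem
    rw [uIoc_of_le hs.1] at htmem
    have htIcc : t ∈ Icc (0:ℝ) S := ⟨htmem.1.le, htmem.2.trans hs.2⟩
    rw [norm_smul, Real.norm_eq_abs, abs_of_nonneg (hc.le.trans (h1 htIcc).1), smul_eq_mul]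

lemma reparam_feas {Tgt : Set (ℝ × Vec n)} {K : EReal} (h : RepMap S St σ σ') :
    STFeasible Tgt K St y0t yt βt ↔
      STFeasible Tgt K S (fun s => y0t (σ s)) (fun s => yt (σ s)) (fun s => βt (σ s)) := by
  unfold STFeasible
  simp only [h.hσS]

lemma reparam_cost {Ψ : ℝ → Vec n → ℝ} {ℓ0 : Vec n → Vec q → ℝ}
    {ℓ1 : Vec n → Vec m → ℝ} {ℓhat1 : Vec n → ℝ → Vec m → ℝ}
    (hC_cone : ∀ ⦃c : ℝ⦄, 0 < c → ∀ ⦃x : Vec m⦄, x ∈ C → c • x ∈ C)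
    (hrec : IsRecessionOf C ℓhat1 ℓ1)
    (hproc : IsSTProcess C A f g xck St w0t wt αt y0t yt βt)
    (h : RepMap S St σ σ') :
    STCost Ψ ℓ0 ℓhat1 St w0t wt αt y0t yt =
      STCost Ψ ℓ0 ℓhat1 S (fun s => w0t (σ s) * σ' s) (fun s => σ' s • wt (σ s))
        (fun s => αt (σ s)) (fun s => y0t (σ s)) (fun s => yt (σ s)) := by
  obtain ⟨c, L, hc, hL, hcL, hbd⟩ := h.deriv_bounds
  unfold STCost
  simp only [h.hσS]
  congr 1
  have hcov := h.cov_eq (fun u => extL ℓ0 ℓhat1 (yt u) (w0t u) (wt u) (αt u)) h.S_mem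
  rw [h.hσS] at hcov
  rw [hcov]
  refine intervalIntegral.integral_congr_ae ?_
  filter_upwards [ae_imp_of_ae_restrict hbd,
    ae_imp_of_ae_restrict (h.pullback hproc.mem_ae)] with t h1 h2 htmem
  rw [uIoc_of_le h.hS.le] at htmem
  have htIcc : t ∈ Icc (0:ℝ) S := ⟨htmem.1.le, htmem.2⟩
  have hσpos : 0 < σ' t := lt_of_lt_of_le hc (h1 htIcc).1
  rw [smul_eq_mul]
  exact (extL_smul hC_cone hrec _ _ (h2 htIcc).1 (h2 htIcc).2.1 hσpos).symm

end Reparam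

section Theta

open MeasureTheory

variable {S St : ℝ} {σ σ' : ℝ → ℝ}

lemma bilip_of_le {φ : ℝ → ℝ} {I : Set ℝ} {c L : ℝ} (hc : 0 ≤ c)
    (h : ∀ v₁ ∈ I, ∀ v₂ ∈ I, v₁ ≤ v₂ →
      c * (v₂ - v₁) ≤ φ v₂ - φ v₁ ∧ φ v₂ - φ v₁ ≤ L * (v₂ - v₁)) :
    ∀ s₁ ∈ I, ∀ s₂ ∈ I,
      c * |s₁ - s₂| ≤ |φ s₁ - φ s₂| ∧ |φ s₁ - φ s₂| ≤ L * |s₁ - s₂| := by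
  have key : ∀ s₁ ∈ I, ∀ s₂ ∈ I, s₁ ≤ s₂ →
      c * |s₁ - s₂| ≤ |φ s₁ - φ s₂| ∧ |φ s₁ - φ s₂| ≤ L * |s₁ - s₂| := by
    intro s₁ h₁ s₂ h₂ hle
    obtain ⟨ha, hb⟩ := h s₁ h₁ s₂ h₂ hle
    have h0 : 0 ≤ φ s₂ - φ s₁ := le_trans (mul_nonneg hc (by linarith)) ha
    rw [abs_sub_comm s₁ s₂, abs_of_nonneg (by linarith : (0:ℝ) ≤ s₂ - s₁),
      abs_sub_comm (φ s₁) (φ s₂), abs_of_nonneg h0]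
    exact ⟨ha, hb⟩
  intro s₁ h₁ s₂ h₂
  rcases le_total s₁ s₂ with hle | hle
  · exact key s₁ h₁ s₂ h₂ hle
  · have := key s₂ h₂ s₁ h₁ hle
    rwa [abs_sub_comm s₂ s₁, abs_sub_comm (φ s₂) (φ s₁)] at this

def thetaMap (S St S' : ℝ) (σ : ℝ → ℝ) : ℝ → ℝ := fun v =>
  if v ≤ σ (min S' S) then repInv S St σ v else min S' S + (v - σ (min S' S))

def thetaDer (S St S' : ℝ) (σ : ℝ → ℝ) : ℝ → ℝ := fun v =>
  if v ≤ σ (min S' S) then deriv (repInv S St σ) v else 1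

lemma theta_basic (h : RepMap S St σ σ') {S' : ℝ} (hS' : 0 < S') :
    min S' S ∈ Icc (0:ℝ) S ∧ 0 < σ (min S' S) ∧ σ (min S' S) ≤ St ∧
      repInv S St σ (σ (min S' S)) = min S' S := by
  have hm : min S' S ∈ Icc (0:ℝ) S := ⟨(lt_min hS' h.hS).le, min_le_right _ _⟩
  refine ⟨hm, ?_, ?_, h.inv_comp _ hm⟩
  · have := h.hmono h.zero_mem hm (lt_min hS' h.hS)
    rwa [h.hσ0] at this
  · have := h.monotoneOn hm h.S_mem (min_le_right _ _)
    rwa [h.hσS] at this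

lemma theta_repmap (h : RepMap S St σ σ') {S' : ℝ} (hS' : 0 < S') :
    RepMap (σ (min S' S) + max (S' - S) 0) S' (thetaMap S St S' σ) (thetaDer S St S' σ) := by
  obtain ⟨hm, hbpos, hbSt, hgb⟩ := theta_basic h hS'
  set m' := min S' S with hm'def
  set b := σ m' with hbdef
  set S'' := b + max (S' - S) 0 with hS''def
  have hmax0 : (0:ℝ) ≤ max (S' - S) 0 := le_max_right _ _
  have hS''pos : 0 < S'' := by rw [hS''def]; linarith
  have hbS'' : b ≤ S'' := by rw [hS''def]; linarith
  have hθle : ∀ v, v ≤ b → thetaMap S St S' σ v = repInv S St σ v := fun v hv => if_pos hv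
  have hθgt : ∀ v, b < v → thetaMap S St S' σ v = m' + (v - b) :=
    fun v hv => if_neg (not_le.2 hv)
  have hθ0 : thetaMap S St S' σ 0 = 0 := by rw [hθle 0 hbpos.le, h.inv_zero]
  have hθS'' : thetaMap S St S' σ S'' = S' := by
    rcases le_or_gt S' S with hle | hlt
    · have hmax : max (S' - S) 0 = 0 := max_eq_right (by linarith)
      have he : S'' = b := by rw [hS''def, hmax, add_zero]
      rw [he, hθle b le_rfl, hgb]
      exact min_eq_left hle
    · have hm'S : m' = S := min_eq_right hlt.le
      have hmax : max (S' - S) 0 = S' - S := max_eq_left (by linarith)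
      have hgtb : b < S'' := by rw [hS''def, hmax]; linarith
      rw [hθgt _ hgtb, hS''def, hm'S, hmax]
      ring
  have hIccsub : ∀ v ∈ Icc (0:ℝ) S'', v ≤ b → v ∈ Icc (0:ℝ) St :=
    fun v hv hvb => ⟨hv.1, hvb.trans hbSt⟩
  have hbmem : b ∈ Icc (0:ℝ) St := ⟨hbpos.le, hbSt⟩
  have hmono : StrictMonoOn (thetaMap S St S' σ) (Icc (0:ℝ) S'') := by
    intro v₁ hv₁ v₂ hv₂ hlt
    rcases le_or_gt v₂ b with h2 | h2
    · rw [hθle v₁ (hlt.le.trans h2), hθle v₂ h2]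
      exact h.inv_strictMonoOn (hIccsub v₁ hv₁ (hlt.le.trans h2)) (hIccsub v₂ hv₂ h2) hlt
    · rcases le_or_gt v₁ b with h1 | h1
      · rw [hθle v₁ h1, hθgt v₂ h2]
        have e1 : repInv S St σ v₁ ≤ m' := by
          have := h.inv_strictMonoOn.monotoneOn (hIccsub v₁ hv₁ h1) hbmem h1
          rwa [hgb] at this
        linarith
      · rw [hθgt v₁ h1, hθgt v₂ h2]; linarith
  have hmonoOn := hmono.monotoneOn
  have hsurj : thetaMap S St S' σ '' (Icc (0:ℝ) S'') = Icc (0:ℝ) S' := by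
    apply Subset.antisymm
    · rintro x ⟨v, hv, rfl⟩
      constructor
      · have := hmonoOn ⟨le_rfl, hS''pos.le⟩ hv hv.1
        rwa [hθ0] at this
      · have := hmonoOn hv ⟨hS''pos.le, le_rfl⟩ hv.2
        rwa [hθS''] at this
    · intro x hx
      rcases le_or_gt x m' with hxm | hxm
      · have hxS : x ∈ Icc (0:ℝ) S := ⟨hx.1, hxm.trans (min_le_right _ _)⟩
        have hσx : σ x ≤ b := h.monotoneOn hxS hm hxm
        have hσx0 : 0 ≤ σ x := h.sigma_nonneg hxS
        refine ⟨σ x, ⟨hσx0, hσx.trans hbS''⟩, ?_⟩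
        rw [hθle _ hσx, h.inv_comp x hxS]
      · have hSS' : S < S' := by
          by_contra hcon
          push_neg at hcon
          rw [hm'def, min_eq_left hcon] at hxm
          exact absurd hx.2 (not_le.2 hxm)
        have hm'S : m' = S := min_eq_right hSS'.le
        have hmax : max (S' - S) 0 = S' - S := max_eq_left (by linarith)
        refine ⟨b + (x - m'), ⟨by linarith, ?_⟩, ?_⟩
        · rw [hS''def, hmax, hm'S]
          have := hx.2
          rw [hm'S] at hxm
          linarith
        · rw [hθgt _ (by linarith)]; ring
  obtain ⟨cg, Lg, hcg, hbg⟩ := h.inv_bilip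
  have hbilip : ∃ c L : ℝ, 0 < c ∧ ∀ s₁ ∈ Icc (0:ℝ) S'', ∀ s₂ ∈ Icc (0:ℝ) S'',
      c * |s₁ - s₂| ≤ |thetaMap S St S' σ s₁ - thetaMap S St S' σ s₂| ∧
      |thetaMap S St S' σ s₁ - thetaMap S St S' σ s₂| ≤ L * |s₁ - s₂| := by
    refine ⟨min cg 1, max Lg 1, lt_min hcg one_pos, ?_⟩
    refine bilip_of_le (lt_min hcg one_pos).le ?_
    intro v₁ hv₁ v₂ hv₂ hle
    rcases le_or_gt v₂ b with h2 | h2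
    · have m₁ := hIccsub v₁ hv₁ (hle.trans h2)
      have m₂ := hIccsub v₂ hv₂ h2
      have hb' := hbg v₁ m₁ v₂ m₂
      have hgm : repInv S St σ v₁ ≤ repInv S St σ v₂ :=
        h.inv_strictMonoOn.monotoneOn m₁ m₂ hle
      rw [hθle v₁ (hle.trans h2), hθle v₂ h2]
      rw [abs_sub_comm v₁ v₂, abs_of_nonneg (by linarith : (0:ℝ) ≤ v₂ - v₁),
        abs_sub_comm (repInv S St σ v₁) (repInv S St σ v₂),
        abs_of_nonneg (by linarith : (0:ℝ) ≤ repInv S St σ v₂ - repInv S St σ v₁)] at hb'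
      constructor
      · have t1 : min cg 1 * (v₂ - v₁) ≤ cg * (v₂ - v₁) :=
          mul_le_mul_of_nonneg_right (min_le_left _ _) (by linarith)
        linarith [hb'.1]
      · have t1 : Lg * (v₂ - v₁) ≤ max Lg 1 * (v₂ - v₁) :=
          mul_le_mul_of_nonneg_right (le_max_left _ _) (by linarith)
        linarith [hb'.2]
    · rcases le_or_gt v₁ b with h1 | h1
      · have m₁ := hIccsub v₁ hv₁ h1
        have hb' := hbg v₁ m₁ b hbmem
        have hgm : repInv S St σ v₁ ≤ repInv S St σ b :=
          h.inv_strictMonoOn.monotoneOn m₁ hbmem h1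
        rw [hgb] at hb' hgm
        rw [abs_sub_comm v₁ b, abs_of_nonneg (by linarith : (0:ℝ) ≤ b - v₁),
          abs_sub_comm (repInv S St σ v₁) m',
          abs_of_nonneg (by linarith : (0:ℝ) ≤ m' - repInv S St σ v₁)] at hb'
        rw [hθle v₁ h1, hθgt v₂ h2]
        constructor
        · have t1 : min cg 1 * (b - v₁) ≤ cg * (b - v₁) :=
            mul_le_mul_of_nonneg_right (min_le_left _ _) (by linarith)
          have t2 : min cg 1 * (v₂ - b) ≤ 1 * (v₂ - b) :=
            mul_le_mul_of_nonneg_right (min_le_right _ _) (by linarith)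
          nlinarith [hb'.1]
        · have t1 : Lg * (b - v₁) ≤ max Lg 1 * (b - v₁) :=
            mul_le_mul_of_nonneg_right (le_max_left _ _) (by linarith)
          have t2 : 1 * (v₂ - b) ≤ max Lg 1 * (v₂ - b) :=
            mul_le_mul_of_nonneg_right (le_max_right _ _) (by linarith)
          nlinarith [hb'.2]
      · rw [hθgt v₁ h1, hθgt v₂ h2]
        constructor
        · have t1 : min cg 1 * (v₂ - v₁) ≤ 1 * (v₂ - v₁) :=
            mul_le_mul_of_nonneg_right (min_le_right _ _) (by linarith)
          linarith
        · have t1 : 1 * (v₂ - v₁) ≤ max Lg 1 * (v₂ - v₁) :=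
            mul_le_mul_of_nonneg_right (le_max_right _ _) (by linarith)
          linarith
  have hderiv : ∀ᵐ v ∂(volume.restrict (Icc (0:ℝ) S'')),
      HasDerivAt (thetaMap S St S' σ) (thetaDer S St S' σ v) v := by
    obtain ⟨K, hK⟩ := h.inv_lipschitz
    have hnb : ∀ᵐ v : ℝ ∂volume, v ≠ b := by
      have he : {v : ℝ | ¬ v ≠ b} = {b} := by ext v; simp [not_not]
      rw [ae_iff, he]
      exact measure_singleton b
    refine ae_restrict_of_ae ?_
    filter_upwards [hK.ae_differentiableAt (μ := volume), hnb] with v hv hvb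
    have hder_eq : thetaDer S St S' σ v =
        if v ≤ b then deriv (repInv S St σ) v else 1 := rfl
    rcases lt_or_gt_of_ne hvb with hlt | hgt
    · rw [hder_eq, if_pos hlt.le]
      refine (hv.hasDerivAt).congr_of_eventuallyEq ?_
      filter_upwards [Iio_mem_nhds hlt] with x hx
      exact hθle x (le_of_lt hx)
    · rw [hder_eq, if_neg (not_le.2 hgt)]
      have haff : HasDerivAt (fun x : ℝ => m' + (x - b)) 1 v := by
        simpa using ((hasDerivAt_id v).sub_const b).const_add m'
      refine haff.congr_of_eventuallyEq ?_
      filter_upwards [Ioi_mem_nhds hgt] with x hx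
      exact hθgt x hx
  exact ⟨hS''pos, hS', hmono, hθ0, hθS'', hsurj, hbilip, hderiv⟩

lemma clampT_eq_min {S t : ℝ} (h0 : 0 ≤ t) (hS : 0 ≤ S) : clampT S t = min t S := by
  unfold clampT; rw [max_eq_right (le_min h0 hS)]

lemma thetaMap_le {S St S' : ℝ} {σ : ℝ → ℝ} {v : ℝ} (hv : v ≤ σ (min S' S)) :
    thetaMap S St S' σ v = repInv S St σ v := if_pos hv

lemma thetaMap_gt {S St S' : ℝ} {σ : ℝ → ℝ} {v : ℝ} (hv : σ (min S' S) < v) :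
    thetaMap S St S' σ v = min S' S + (v - σ (min S' S)) := if_neg (not_le.2 hv)

lemma theta_pairing (h : RepMap S St σ σ') {S' : ℝ} (hS' : 0 < S') (u : ℝ) :
    ∃ t : ℝ, σ (clampT S t) = clampT St u ∧
      clampT S' t = thetaMap S St S' σ (clampT (σ (min S' S) + max (S' - S) 0) u) := by
  obtain ⟨hm, hbpos, hbSt, hgb⟩ := theta_basic h hS'
  set m' := min S' S with hm'def
  set b := σ m' with hbdef
  set S'' := b + max (S' - S) 0 with hS''def
  have hmax0 : (0:ℝ) ≤ max (S' - S) 0 := le_max_right _ _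
  have hbS'' : b ≤ S'' := by rw [hS''def]; linarith
  have hbIcc : b ∈ Icc (0:ℝ) St := ⟨hbpos.le, hbSt⟩
  rcases le_or_gt u St with hu | hu
  · -- u ≤ St
    have hx : clampT St u ∈ Icc (0:ℝ) St := clampT_mem h.hSt.le u
    obtain ⟨hgx, hσgx⟩ := h.inv_spec _ hx
    have hxeq : clampT St u = max 0 u := by unfold clampT; rw [min_eq_left hu]
    refine ⟨repInv S St σ (clampT St u), by rw [clampT_eq_self hgx, hσgx], ?_⟩
    have hLHS : clampT S' (repInv S St σ (clampT St u)) =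
        min (repInv S St σ (clampT St u)) S' := clampT_eq_min hgx.1 hS'.le
    rcases le_or_gt u b with hub | hub
    · have hcl : clampT S'' u = max 0 u := by
        unfold clampT; rw [min_eq_left (hub.trans hbS'')]
      have hmu : max 0 u ≤ b := max_le hbpos.le hub
      have hmem1 : max 0 u ∈ Icc (0:ℝ) St := ⟨le_max_left _ _, hmu.trans hbSt⟩
      have hgle : repInv S St σ (max 0 u) ≤ m' := by
        have := h.inv_strictMonoOn.monotoneOn hmem1 hbIcc hmu
        rwa [hgb] at this
      rw [hcl, thetaMap_le hmu, hLHS, hxeq]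
      exact min_eq_left (hgle.trans (min_le_left _ _))
    · rcases le_or_gt S' S with hS'S | hSS'
      · have hm'eq : m' = S' := min_eq_left hS'S
        have hmax : max (S' - S) 0 = 0 := max_eq_right (by linarith)
        have hS''b : S'' = b := by rw [hS''def, hmax, add_zero]
        have hcl : clampT S'' u = b := by
          unfold clampT
          rw [hS''b, min_eq_right hub.le, max_eq_right hbpos.le]
        have hbx : b ≤ clampT St u := by rw [hxeq]; exact hub.le.trans (le_max_right _ _)
        have hge : m' ≤ repInv S St σ (clampT St u) := by
          have := h.inv_strictMonoOn.monotoneOn hbIcc hx hbx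
          rwa [hgb] at this
        rw [hcl, thetaMap_le le_rfl, hgb, hLHS]
        rw [hm'eq] at hge ⊢
        exact min_eq_right hge
      · exfalso
        have hm'S : m' = S := min_eq_right hSS'.le
        have hb2 : b = St := by rw [hbdef, hm'S, h.hσS]
        rw [hb2] at hub
        exact absurd hu (not_le.2 hub)
  · -- St < u
    have hA : clampT St u = St := by
      unfold clampT; rw [min_eq_right hu.le, max_eq_right h.hSt.le]
    rcases le_or_gt S' S with hS'S | hSS'
    · have hm'eq : m' = S' := min_eq_left hS'S
      have hmax : max (S' - S) 0 = 0 := max_eq_right (by linarith)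
      have hS''b : S'' = b := by rw [hS''def, hmax, add_zero]
      refine ⟨S, by rw [clampT_eq_self h.S_mem, h.hσS, hA], ?_⟩
      have h1 : clampT S' S = S' := by
        unfold clampT; rw [min_eq_right hS'S, max_eq_right hS'.le]
      have h2 : clampT S'' u = b := by
        unfold clampT
        rw [hS''b, min_eq_right (hbSt.trans hu.le), max_eq_right hbpos.le]
      rw [h1, h2, thetaMap_le le_rfl, hgb, hm'eq]
    · have hm'S : m' = S := min_eq_right hSS'.le
      have hb2 : b = St := by rw [hbdef, hm'S, h.hσS]
      have hmax : max (S' - S) 0 = S' - S := max_eq_left (by linarith)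
      have hS''eq : S'' = St + (S' - S) := by rw [hS''def, hb2, hmax]
      have hvSt : St < min u S'' := lt_min hu (by rw [hS''eq]; linarith)
      have hv0 : 0 ≤ min u S'' := h.hSt.le.trans hvSt.le
      refine ⟨S + (min u S'' - St), ?_, ?_⟩
      · have hcl : clampT S (S + (min u S'' - St)) = S := by
          unfold clampT
          rw [min_eq_right (by linarith), max_eq_right h.hS.le]
        rw [hcl, h.hσS, hA]
      · have hle2 : S + (min u S'' - St) ≤ S' := by
          have h3 := min_le_right u S''
          linarith
        have h1 : clampT S' (S + (min u S'' - St)) = S + (min u S'' - St) :=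
          clampT_eq_self ⟨by linarith [h.hS, hvSt.le], hle2⟩
        have h2 : clampT S'' u = min u S'' := by
          unfold clampT; rw [max_eq_right hv0]
        rw [h1, h2, thetaMap_gt (by rw [← hbdef, hb2]; exact hvSt), ← hm'def, ← hbdef,
          hm'S, hb2]
end Theta

section LocalMin

open MeasureTheory intervalIntegral

variable {n m q : ℕ} {C : Set (Vec m)} {A : Set (Vec q)}
  {f : Vec n → Vec q → Vec n} {g : Fin m → Vec n → Vec n} {xck : Vec n}
  {St : ℝ} {w0t : ℝ → ℝ} {wt : ℝ → Vec m} {αt : ℝ → Vec q}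
  {y0t : ℝ → ℝ} {yt : ℝ → Vec n} {βt : ℝ → ℝ}
  {S : ℝ} {σ σ' : ℝ → ℝ}

lemma primitive_continuousOn {X : Type*} [NormedAddCommGroup X] [NormedSpace ℝ X]
    {φ : ℝ → X} {S : ℝ} (hS : 0 ≤ S) (hint : IntervalIntegrable φ volume 0 S) :
    ContinuousOn (fun s => ∫ t in (0:ℝ)..s, φ t) (Icc (0:ℝ) S) := by
  have h1 : IntegrableOn φ (uIcc 0 S) volume := by
    rw [uIcc_of_le hS]
    exact (integrableOn_Icc_iff_integrableOn_Ioc (by simp)).2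
      ((intervalIntegrable_iff_integrableOn_Ioc_of_le hS).1 hint)
  have h2 := intervalIntegral.continuousOn_primitive_interval h1
  rwa [uIcc_of_le hS] at h2

lemma proc_continuousOn {S : ℝ} {w0 : ℝ → ℝ} {w : ℝ → Vec m} {α : ℝ → Vec q}
    {y0 : ℝ → ℝ} {y : ℝ → Vec n} {β : ℝ → ℝ}
    (hproc : IsSTProcess C A f g xck S w0 w α y0 y β) :
    ContinuousOn (fun s => (y0 s, y s, β s)) (Icc (0:ℝ) S) := by
  have hS0 : (0:ℝ) ≤ S := hproc.hS.le
  have c1 : ContinuousOn y0 (Icc (0:ℝ) S) :=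
    (primitive_continuousOn hS0 hproc.int_w0).congr fun s hs => hproc.sol_y0 s hs
  have c2 : ContinuousOn y (Icc (0:ℝ) S) :=
    (continuousOn_const.add (primitive_continuousOn hS0 hproc.int_F)).congr
      fun s hs => hproc.sol_y s hs
  have c3 : ContinuousOn β (Icc (0:ℝ) S) :=
    (primitive_continuousOn hS0 hproc.int_w).congr fun s hs => hproc.sol_β s hs
  exact c1.prodMk (c2.prodMk c3)

lemma bddAbove_dist_comp {X : Type*} [PseudoMetricSpace X] {F G : ℝ → X} {K₁ K₂ : Set X}
    (h₁ : Bornology.IsBounded K₁) (h₂ : Bornology.IsBounded K₂)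
    (hF : ∀ t, F t ∈ K₁) (hG : ∀ t, G t ∈ K₂) :
    BddAbove (Set.range fun t => dist (F t) (G t)) := by
  obtain ⟨r₁, hr₁⟩ := h₁.subset_closedBall (F 0)
  obtain ⟨r₂, hr₂⟩ := h₂.subset_closedBall (F 0)
  refine ⟨r₁ + r₂, ?_⟩
  rintro d ⟨t, rfl⟩
  have d1 : dist (F t) (F 0) ≤ r₁ := hr₁ (hF t)
  have d2 : dist (G t) (F 0) ≤ r₂ := hr₂ (hG t)
  calc dist (F t) (G t) ≤ dist (F t) (F 0) + dist (F 0) (G t) := dist_triangle _ _ _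
  _ ≤ r₁ + r₂ := add_le_add d1 (by rwa [dist_comm])

lemma localmin_transfer {Tgt : Set (ℝ × Vec n)} {K : EReal} {Ψ : ℝ → Vec n → ℝ}
    {ℓ0 : Vec n → Vec q → ℝ} {ℓ1 : Vec n → Vec m → ℝ} {ℓhat1 : Vec n → ℝ → Vec m → ℝ}
    (hC_cone : ∀ ⦃c : ℝ⦄, 0 < c → ∀ ⦃x : Vec m⦄, x ∈ C → c • x ∈ C)
    (hrec : IsRecessionOf C ℓhat1 ℓ1)
    (h : RepMap S St σ σ')
    (hmin : IsSTLocalMin C A f g xck Tgt K Ψ ℓ0 ℓhat1 St w0t wt αt y0t yt βt) :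
    IsSTLocalMin C A f g xck Tgt K Ψ ℓ0 ℓhat1 S
      (fun s => w0t (σ s) * σ' s) (fun s => σ' s • wt (σ s)) (fun s => αt (σ s))
      (fun s => y0t (σ s)) (fun s => yt (σ s)) (fun s => βt (σ s)) := by
  obtain ⟨hprocOld, hfeasOld, δ, hδ, hcomp⟩ := hmin
  obtain ⟨c, L, hc, hL, hcL, hb⟩ := h.exists_consts
  have hML : (0:ℝ) < max 1 L := lt_of_lt_of_le one_pos (le_max_left _ _)
  refine ⟨reparam_process hC_cone hprocOld h, (reparam_feas h).1 hfeasOld,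
    δ / max 1 L, div_pos hδ hML, ?_⟩
  intro S' w0' w' α' y0' y' β' hproc' hfeas' hdist
  have hθ := theta_repmap h hproc'.hS
  have hproc'' := reparam_process hC_cone hproc' hθ
  have hfeas'' := (reparam_feas hθ).1 hfeas'
  have hcost'' := reparam_cost (Ψ := Ψ) (ℓ0 := ℓ0) hC_cone hrec hproc' hθ
  set S'' := σ (min S' S) + max (S' - S) 0 with hS''def
  have hdist'' : dProc St (fun s => (y0t s, yt s, βt s)) S''
      (fun v => (y0' (thetaMap S St S' σ v), y' (thetaMap S St S' σ v),
        β' (thetaMap S St S' σ v))) < δ := by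
    have hend : |St - S''| ≤ max 1 L * |S - S'| := by
      rcases le_or_gt S' S with hle | hlt
      · have hmax : max (S' - S) 0 = 0 := max_eq_right (by linarith)
        have hm' : min S' S = S' := min_eq_left hle
        have hb1 := (hb S h.S_mem S' ⟨hproc'.hS.le, hle⟩).2
        rw [h.hσS] at hb1
        rw [hS''def, hmax, hm', add_zero]
        calc |St - σ S'| ≤ L * |S - S'| := hb1
        _ ≤ max 1 L * |S - S'| :=
          mul_le_mul_of_nonneg_right (le_max_right _ _) (abs_nonneg _)
      · have hmax : max (S' - S) 0 = S' - S := max_eq_left (by linarith)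
        have hm' : min S' S = S := min_eq_right hlt.le
        rw [hS''def, hmax, hm', h.hσS]
        have e : St - (St + (S' - S)) = S - S' := by ring
        rw [e]
        calc |S - S'| = 1 * |S - S'| := (one_mul _).symm
        _ ≤ max 1 L * |S - S'| :=
          mul_le_mul_of_nonneg_right (le_max_left _ _) (abs_nonneg _)
    have hbddNew : BddAbove (Set.range fun t => dist
        ((y0t (σ (clampT S t)), yt (σ (clampT S t)), βt (σ (clampT S t))))
        ((y0' (clampT S' t), y' (clampT S' t), β' (clampT S' t)))) := by
      apply bddAbove_dist_comp
        ((isCompact_Icc.image_of_continuousOn (proc_continuousOn hprocOld)).isBounded)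
        ((isCompact_Icc.image_of_continuousOn (proc_continuousOn hproc')).isBounded)
      · intro t; exact mem_image_of_mem _ (h.mapsTo (clampT_mem h.hS.le t))
      · intro t; exact mem_image_of_mem _ (clampT_mem hproc'.hS.le t)
    have hsup : (⨆ u : ℝ, dist ((y0t (clampT St u), yt (clampT St u), βt (clampT St u)))
        ((y0' (thetaMap S St S' σ (clampT S'' u)),
          y' (thetaMap S St S' σ (clampT S'' u)),
          β' (thetaMap S St S' σ (clampT S'' u)))))
        ≤ ⨆ t : ℝ, dist ((y0t (σ (clampT S t)), yt (σ (clampT S t)), βt (σ (clampT S t))))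
          ((y0' (clampT S' t), y' (clampT S' t), β' (clampT S' t))) := by
      refine Real.iSup_le (fun u => ?_) (Real.iSup_nonneg fun t => dist_nonneg)
      obtain ⟨t, h1, h2⟩ := theta_pairing h hproc'.hS u
      rw [← hS''def] at h2
      rw [← h1, ← h2]
      exact le_ciSup hbddNew t
    have hnn : (0:ℝ) ≤ ⨆ t : ℝ,
        dist ((y0t (σ (clampT S t)), yt (σ (clampT S t)), βt (σ (clampT S t))))
          ((y0' (clampT S' t), y' (clampT S' t), β' (clampT S' t))) :=
      Real.iSup_nonneg fun t => dist_nonneg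
    have h1L : (1:ℝ) ≤ max 1 L := le_max_left _ _
    have hfac : max 1 L * |S - S'| + (⨆ t : ℝ,
        dist ((y0t (σ (clampT S t)), yt (σ (clampT S t)), βt (σ (clampT S t))))
          ((y0' (clampT S' t), y' (clampT S' t), β' (clampT S' t))))
        ≤ max 1 L * (|S - S'| + ⨆ t : ℝ,
        dist ((y0t (σ (clampT S t)), yt (σ (clampT S t)), βt (σ (clampT S t))))
          ((y0' (clampT S' t), y' (clampT S' t), β' (clampT S' t)))) := by
      nlinarith [hnn, h1L]
    have hd2 : |S - S'| + (⨆ t : ℝ,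
        dist ((y0t (σ (clampT S t)), yt (σ (clampT S t)), βt (σ (clampT S t))))
          ((y0' (clampT S' t), y' (clampT S' t), β' (clampT S' t)))) < δ / max 1 L := hdist
    have hlt2 : max 1 L * (|S - S'| + ⨆ t : ℝ,
        dist ((y0t (σ (clampT S t)), yt (σ (clampT S t)), βt (σ (clampT S t))))
          ((y0' (clampT S' t), y' (clampT S' t), β' (clampT S' t)))) < δ := by
      have h5 := mul_lt_mul_of_pos_left hd2 hML
      rwa [mul_div_cancel₀ δ hML.ne'] at h5
    show |St - S''| + (⨆ u : ℝ,
        dist ((y0t (clampT St u), yt (clampT St u), βt (clampT St u)))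
        ((y0' (thetaMap S St S' σ (clampT S'' u)),
          y' (thetaMap S St S' σ (clampT S'' u)),
          β' (thetaMap S St S' σ (clampT S'' u))))) < δ
    linarith [hend, hsup]
  have hle := hcomp S'' _ _ _ _ _ _ hproc'' hfeas'' hdist''
  rw [← hcost''] at hle
  have e := reparam_cost (Ψ := Ψ) (ℓ0 := ℓ0) hC_cone hrec hprocOld h
  rw [← e]
  exact hle

lemma localmin_congr {Tgt : Set (ℝ × Vec n)} {K : EReal} {Ψ : ℝ → Vec n → ℝ}
    {ℓ0 : Vec n → Vec q → ℝ} {ℓhat1 : Vec n → ℝ → Vec m → ℝ}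
    {S : ℝ} {w0₁ w0₂ : ℝ → ℝ} {w₁ w₂ : ℝ → Vec m} {α₁ α₂ : ℝ → Vec q}
    {y0₁ y0₂ : ℝ → ℝ} {y₁ y₂ : ℝ → Vec n} {β₁ β₂ : ℝ → ℝ}
    (h1 : IsSTLocalMin C A f g xck Tgt K Ψ ℓ0 ℓhat1 S w0₁ w₁ α₁ y0₁ y₁ β₁)
    (hproc₂ : IsSTProcess C A f g xck S w0₂ w₂ α₂ y0₂ y₂ β₂)
    (hy0 : ∀ s ∈ Icc (0:ℝ) S, y0₁ s = y0₂ s)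
    (hy : ∀ s ∈ Icc (0:ℝ) S, y₁ s = y₂ s)
    (hβ : ∀ s ∈ Icc (0:ℝ) S, β₁ s = β₂ s)
    (hcost : STCost Ψ ℓ0 ℓhat1 S w0₁ w₁ α₁ y0₁ y₁ = STCost Ψ ℓ0 ℓhat1 S w0₂ w₂ α₂ y0₂ y₂) :
    IsSTLocalMin C A f g xck Tgt K Ψ ℓ0 ℓhat1 S w0₂ w₂ α₂ y0₂ y₂ β₂ := by
  obtain ⟨hp₁, hf₁, δ, hδ, hcomp⟩ := h1
  have hS0 : (0:ℝ) ≤ S := hp₁.hS.le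
  have hSmem : S ∈ Icc (0:ℝ) S := ⟨hS0, le_rfl⟩
  have hfeas₂ : STFeasible Tgt K S y0₂ y₂ β₂ := by
    unfold STFeasible at hf₁ ⊢
    rw [← hy0 S hSmem, ← hy S hSmem, ← hβ S hSmem]
    exact hf₁
  refine ⟨hproc₂, hfeas₂, δ, hδ, ?_⟩
  intro S₂ w0Q wQ αQ y0Q yQ βQ hQ hFQ hdQ
  have hdeq : dProc S (fun s => (y0₁ s, y₁ s, β₁ s)) S₂ (fun s => (y0Q s, yQ s, βQ s)) =
      dProc S (fun s => (y0₂ s, y₂ s, β₂ s)) S₂ (fun s => (y0Q s, yQ s, βQ s)) := by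
    unfold dProc
    congr 1
    refine iSup_congr fun t => ?_
    have hcm := clampT_mem hS0 t
    simp only [hy0 _ hcm, hy _ hcm, hβ _ hcm]
  rw [← hcost]
  exact hcomp S₂ _ _ _ _ _ _ hQ hFQ (by rw [hdeq]; exact hdQ)

end LocalMin

/-- Let `σ : [0,S] → [0,S̃]` be strictly increasing, surjective and
bi-Lipschitz, with a.e. derivative `σ'`, and let `(S̃, w̃⁰, w̃, α̃, ỹ⁰, ỹ, β̃)` be a
space-time process.  Then the reparameterized tuple
`(S, (w̃⁰∘σ)·σ', ((w̃∘σ)·σ'), α̃∘σ, ỹ⁰∘σ, ỹ∘σ, β̃∘σ)` is a space-time process; it is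
feasible iff the original is; the costs coincide; and the original is a local
(resp. global) minimizer of the space-time problem iff the reparameterized process is. -/
theorem spaceTime_reparameterization_equivalence
    {n m q : ℕ} (C : Set (Vec m)) (A : Set (Vec q))
    (f : Vec n → Vec q → Vec n) (g : Fin m → Vec n → Vec n) (xck : Vec n)
    (Tgt : Set (ℝ × Vec n)) (K : EReal) (Ψ : ℝ → Vec n → ℝ)
    (ℓ0 : Vec n → Vec q → ℝ) (ℓ1 : Vec n → Vec m → ℝ) (ℓhat1 : Vec n → ℝ → Vec m → ℝ)
    (hSets : HpSets C A Tgt K) (hReg : HpReg C A f g ℓ0 ℓhat1 Ψ)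
    (hrec : IsRecessionOf C ℓhat1 ℓ1)
    -- the given space-time process
    (St : ℝ) (w0t : ℝ → ℝ) (wt : ℝ → Vec m) (αt : ℝ → Vec q)
    (y0t : ℝ → ℝ) (yt : ℝ → Vec n) (βt : ℝ → ℝ)
    (hproc : IsSTProcess C A f g xck St w0t wt αt y0t yt βt)
    -- σ : [0,S] → [0,S̃] strictly increasing, surjective, bi-Lipschitz,
    -- with a.e. derivative σ'
    (S : ℝ) (hS : 0 < S) (σ σ' : ℝ → ℝ)
    (hmono : StrictMonoOn σ (Icc (0:ℝ) S))
    (hσ0 : σ 0 = 0) (hσS : σ S = St)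
    (hsurj : σ '' (Icc (0:ℝ) S) = Icc (0:ℝ) St)
    (hbilip : ∃ c L : ℝ, 0 < c ∧
      ∀ s₁ ∈ Icc (0:ℝ) S, ∀ s₂ ∈ Icc (0:ℝ) S,
        c * |s₁ - s₂| ≤ |σ s₁ - σ s₂| ∧ |σ s₁ - σ s₂| ≤ L * |s₁ - s₂|)
    (hderiv : ∀ᵐ s ∂(volume.restrict (Icc (0:ℝ) S)), HasDerivAt σ (σ' s) s) :
    IsSTProcess C A f g xck S
      (fun s => w0t (σ s) * σ' s) (fun s => σ' s • wt (σ s)) (fun s => αt (σ s))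
      (fun s => y0t (σ s)) (fun s => yt (σ s)) (fun s => βt (σ s)) ∧
    (STFeasible Tgt K St y0t yt βt ↔
      STFeasible Tgt K S (fun s => y0t (σ s)) (fun s => yt (σ s)) (fun s => βt (σ s))) ∧
    STCost Ψ ℓ0 ℓhat1 St w0t wt αt y0t yt
      = STCost Ψ ℓ0 ℓhat1 S (fun s => w0t (σ s) * σ' s) (fun s => σ' s • wt (σ s))
          (fun s => αt (σ s)) (fun s => y0t (σ s)) (fun s => yt (σ s)) ∧
    (IsSTLocalMin C A f g xck Tgt K Ψ ℓ0 ℓhat1 St w0t wt αt y0t yt βt ↔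
      IsSTLocalMin C A f g xck Tgt K Ψ ℓ0 ℓhat1 S
        (fun s => w0t (σ s) * σ' s) (fun s => σ' s • wt (σ s)) (fun s => αt (σ s))
        (fun s => y0t (σ s)) (fun s => yt (σ s)) (fun s => βt (σ s))) ∧
    (IsSTGlobalMin C A f g xck Tgt K Ψ ℓ0 ℓhat1 St w0t wt αt y0t yt βt ↔
      IsSTGlobalMin C A f g xck Tgt K Ψ ℓ0 ℓhat1 S
        (fun s => w0t (σ s) * σ' s) (fun s => σ' s • wt (σ s)) (fun s => αt (σ s))
        (fun s => y0t (σ s)) (fun s => yt (σ s)) (fun s => βt (σ s))) := by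
  have h : RepMap S St σ σ' :=
    ⟨hS, hproc.hS, hmono, hσ0, hσS, hsurj, hbilip, hderiv⟩
  have hCc := hSets.hC_cone
  refine ⟨reparam_process hCc hproc h, reparam_feas h,
    reparam_cost (Ψ := Ψ) (ℓ0 := ℓ0) hCc hrec hproc h, ?_, ?_⟩
  · constructor
    · exact fun hm => localmin_transfer hCc hrec h hm
    · intro hm
      have hnewproc := reparam_process hCc hproc h
      have hinv := h.inv_repmap
      have hm2 := localmin_transfer hCc hrec hinv hm
      refine localmin_congr hm2 hproc ?_ ?_ ?_ ?_
      · intro u hu; simp only [(h.inv_spec u hu).2]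
      · intro u hu; simp only [(h.inv_spec u hu).2]
      · intro u hu; simp only [(h.inv_spec u hu).2]
      · have e1 := reparam_cost (Ψ := Ψ) (ℓ0 := ℓ0) hCc hrec hproc h
        have e2 := reparam_cost (Ψ := Ψ) (ℓ0 := ℓ0) hCc hrec hnewproc hinv
        exact e2.symm.trans e1.symm
  · constructor
    · rintro ⟨hp, hf, hall⟩
      refine ⟨reparam_process hCc hproc h, (reparam_feas h).1 hf, ?_⟩
      intro S₂ w0Q wQ αQ y0Q yQ βQ hQ hFQ
      rw [← reparam_cost (Ψ := Ψ) (ℓ0 := ℓ0) hCc hrec hproc h]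
      exact hall S₂ w0Q wQ αQ y0Q yQ βQ hQ hFQ
    · rintro ⟨hp, hf, hall⟩
      refine ⟨hproc, (reparam_feas h).2 hf, ?_⟩
      intro S₂ w0Q wQ αQ y0Q yQ βQ hQ hFQ
      rw [reparam_cost (Ψ := Ψ) (ℓ0 := ℓ0) hCc hrec hproc h]
      exact hall S₂ w0Q wQ αQ y0Q yQ βQ hQ hFQ
end
end

section
/- Assume ℓ₁(x,·) is positively 1-homogeneous, so that ℓᵉ(x,w⁰,w,a) = ℓ₀(x,a)w⁰ + ℓ₁(x,w). Let (S̄, w̄⁰, w̄, ᾱ, ȳ⁰, ȳ, β̄) be a canonical extremal obeying the conditions of the First Order Maximum Principle with multiplier (p₀, p, π, λ). Then there exists a zero-measure set 𝒩 ⊂ [0,S̄] such that for every s ∈ [0,S̄]∖𝒩: H(ȳ(s), p₀, p(s), π, λ, w̄⁰(s), w̄(s), ᾱ(s)) = 𝐇(ȳ(s), p₀, p(s), π, λ) = max{𝐇^{dr}(ȳ(s), p₀, p(s), λ), 𝐇^{imp}(ȳ(s), p(s), π, λ)} = 0; w̄⁰(s)·[p₀ + p(s)·f(ȳ(s), ᾱ(s))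 − λℓ₀(ȳ(s), ᾱ(s))] = 0; and p(s)·Σᵢ gᵢ(ȳ(s)) w̄ⁱ(s) + π|w̄(s)| − λℓ₁(ȳ(s), w̄(s)) = 0. Moreover, for s ∈ [0,S̄]∖𝒩: (i) if 𝐇^{dr}(ȳ(s), p₀, p(s), λ) < 0 then w̄⁰(s) = 0 and p(s)·Σᵢ gᵢ(ȳ(s)) w̄ⁱ(s) + π − λℓ₁(ȳ(s), w̄(s)) = 𝐇^{imp}(ȳ(s), p(s), π, λ) = 0; (ii) if 𝐇^{imp}(ȳ(s), p(s), π, λ) < 0 then w̄(s) = 0 and p₀ + p(s)·f(ȳ(s), ᾱ(s)) − λℓ₀(ȳ(s), ᾱ(s)) = 𝐇^{dr}(ȳ(s), p₀, p(s), λ) = 0. -/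
open MeasureTheory Set Filter Asymptotics Topology
noncomputable section

variable {n m q : ℕ}

/-- The drift Hamiltonian `𝐇^{dr}(x,p₀,p,λ) = max_{a∈A} {p₀ + p·f(x,a) − λℓ₀(x,a)}`. -/
def Hdr (A : Set (Vec q)) (f : Vec n → Vec q → Vec n) (ℓ0 : Vec n → Vec q → ℝ)
    (x : Vec n) (p0 : ℝ) (p : Vec n) (lam : ℝ) : ℝ :=
  sSup { h : ℝ | ∃ a ∈ A, h = p0 + (inner ℝ p (f x a) : ℝ) - lam * ℓ0 x a }

/-- The impulse Hamiltonian
`𝐇^{imp}(x,p,π,λ) = max_{w∈𝒞,|w|=1} {p·Σᵢ gᵢ(x)wⁱ + π − λℓ₁(x,w)}`. -/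
def Himp (C : Set (Vec m)) (g : Fin m → Vec n → Vec n) (ℓ1 : Vec n → Vec m → ℝ)
    (x : Vec n) (p : Vec n) (pi lam : ℝ) : ℝ :=
  sSup { h : ℝ | ∃ w : Vec m, w ∈ C ∧ ‖w‖ = 1 ∧
    h = (inner ℝ p (∑ i, w i • g i x) : ℝ) + pi - lam * ℓ1 x w }

section AuxKey

variable {n m q : ℕ}

lemma key_lemma (C : Set (Vec m)) (A : Set (Vec q))
    (f : Vec n → Vec q → Vec n) (g : Fin m → Vec n → Vec n)
    (ℓ0 : Vec n → Vec q → ℝ) (ℓ1 : Vec n → Vec m → ℝ) (ℓhat1 : Vec n → ℝ → Vec m → ℝ)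
    (hA : IsCompact A) (hCc : IsClosed C)
    (h0C : (0 : Vec m) ∈ C)
    (hcone : ∀ ⦃c : ℝ⦄, 0 < c → ∀ ⦃x⦄, x ∈ C → c • x ∈ C)
    (hfc : Continuous (fun z : Vec n × Vec q => f z.1 z.2))
    (hl0c : Continuous (fun z : Vec n × Vec q => ℓ0 z.1 z.2))
    (hl1c : ContinuousOn (fun z : Vec n × ℝ × Vec m => ℓhat1 z.1 z.2.1 z.2.2)
      (Set.univ ×ˢ (Set.Ici (0:ℝ)) ×ˢ C))
    (hhom : ∀ (x : Vec n) (r : ℝ), 0 < r → ∀ w : Vec m, ℓ1 x (r • w) = r * ℓ1 x w)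
    (hform : ∀ (x : Vec n) (w0 : ℝ), 0 ≤ w0 → ∀ w ∈ C, ℓhat1 x w0 w = ℓ1 x w)
    (x : Vec n) (p0 : ℝ) (P : Vec n) (pi lam : ℝ)
    (w0v : ℝ) (wv : Vec m) (av : Vec q)
    (hw0 : 0 ≤ w0v) (hwC : wv ∈ C) (hsum : w0v + ‖wv‖ = 1) (haA : av ∈ A)
    (hmax : Ham f g ℓ0 ℓhat1 x p0 P pi lam w0v wv av = bigH C A f g ℓ0 ℓhat1 x p0 P pi lam)
    (hzero : bigH C A f g ℓ0 ℓhat1 x p0 P pi lam = 0) :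
    (Ham f g ℓ0 ℓhat1 x p0 P pi lam w0v wv av = bigH C A f g ℓ0 ℓhat1 x p0 P pi lam) ∧
    (bigH C A f g ℓ0 ℓhat1 x p0 P pi lam
        = max (Hdr A f ℓ0 x p0 P lam) (Himp C g ℓ1 x P pi lam)) ∧
    (bigH C A f g ℓ0 ℓhat1 x p0 P pi lam = 0) ∧
    (w0v * (p0 + (inner ℝ P (f x av) : ℝ) - lam * ℓ0 x av) = 0) ∧
    ((inner ℝ P (∑ i, wv i • g i x) : ℝ) + pi * ‖wv‖ - lam * ℓ1 x wv = 0) ∧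
    (Hdr A f ℓ0 x p0 P lam < 0 →
      w0v = 0 ∧
      (inner ℝ P (∑ i, wv i • g i x) : ℝ) + pi - lam * ℓ1 x wv = Himp C g ℓ1 x P pi lam ∧
      Himp C g ℓ1 x P pi lam = 0) ∧
    (Himp C g ℓ1 x P pi lam < 0 →
      wv = 0 ∧
      p0 + (inner ℝ P (f x av) : ℝ) - lam * ℓ0 x av = Hdr A f ℓ0 x p0 P lam ∧
      Hdr A f ℓ0 x p0 P lam = 0) := by
  set D : Vec q → ℝ := fun a => p0 + (inner ℝ P (f x a) : ℝ) - lam * ℓ0 x a with hDdef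
  set ψ : Vec m → ℝ := fun v => (inner ℝ P (∑ i, v i • g i x) : ℝ) + pi * ‖v‖ - lam * ℓ1 x v
    with hψdef
  set φ : Vec m → ℝ := fun v => (inner ℝ P (∑ i, v i • g i x) : ℝ) + pi - lam * ℓ1 x v
    with hφdef
  have hl1zero : ℓ1 x 0 = 0 := by
    have h := hhom x 2 two_pos 0
    rw [smul_zero] at h; linarith
  have hψ0 : ψ 0 = 0 := by
    simp [hψdef, hl1zero]
  have hamC : ∀ (w0' : ℝ) (w' : Vec m) (a' : Vec q), 0 ≤ w0' → w' ∈ C →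
      Ham f g ℓ0 ℓhat1 x p0 P pi lam w0' w' a' = w0' * D a' + ψ w' := by
    intro w0' w' a' h0 hC'
    simp only [Ham, Fe, extL, hform x w0' h0 w' hC', inner_add_right, real_inner_smul_right,
      hDdef, hψdef]
    ring
  have hψsc : ∀ (r : ℝ), 0 < r → ∀ v : Vec m, ψ (r • v) = r * ψ v := by
    intro r hr v
    have h1 : ∑ i, (r • v) i • g i x = r • ∑ i, v i • g i x := by
      rw [Finset.smul_sum]
      refine Finset.sum_congr rfl fun i _ => ?_
      simp [PiLp.smul_apply, smul_smul]
    simp only [hψdef, h1, real_inner_smul_right, norm_smul, Real.norm_eq_abs, abs_of_pos hr,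
      hhom x r hr v]
    ring
  -- boundedness of the Hdr and Himp index sets
  have hDcont : Continuous D := by
    have hc1 : Continuous fun a : Vec q => f x a := hfc.comp (Continuous.prodMk_right x)
    have hc2 : Continuous fun a : Vec q => ℓ0 x a := hl0c.comp (Continuous.prodMk_right x)
    exact (continuous_const.add (continuous_const.inner hc1)).sub (continuous_const.mul hc2)
  have hDbdd : BddAbove {h : ℝ | ∃ a ∈ A, h = D a} := by
    have heq : {h : ℝ | ∃ a ∈ A, h = D a} = D '' A := by
      ext h; constructor
      · rintro ⟨a, ha, rfl⟩; exact ⟨a, ha, rfl⟩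
      · rintro ⟨a, ha, rfl⟩; exact ⟨a, ha, rfl⟩
    rw [heq]
    exact hA.bddAbove_image hDcont.continuousOn
  have hsC : IsCompact (C ∩ Metric.sphere (0:Vec m) 1) := (isCompact_sphere _ _).inter_left hCc
  have hl1on : ContinuousOn (fun v : Vec m => ℓ1 x v) C := by
    have h1 : ContinuousOn (fun v : Vec m => ℓhat1 x 0 v) C := by
      refine hl1c.comp (Continuous.continuousOn
        (continuous_const.prodMk (continuous_const.prodMk continuous_id))) ?_
      intro v hv
      exact ⟨mem_univ _, Set.mem_Ici.mpr le_rfl, hv⟩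
    exact h1.congr fun v hv => (hform x 0 le_rfl v hv).symm
  have hφcont : ContinuousOn φ (C ∩ Metric.sphere (0:Vec m) 1) := by
    have hc1 : Continuous fun v : Vec m => (inner ℝ P (∑ i, v i • g i x) : ℝ) :=
      continuous_const.inner (continuous_finset_sum _ fun i _ =>
        (PiLp.continuous_apply 2 _ i).smul continuous_const)
    exact ((hc1.continuousOn.add continuousOn_const).sub
      (continuousOn_const.mul (hl1on.mono inter_subset_left)))
  have hIbdd : BddAbove {h : ℝ | ∃ v : Vec m, v ∈ C ∧ ‖v‖ = 1 ∧ h = φ v} := by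
    have heq : {h : ℝ | ∃ v : Vec m, v ∈ C ∧ ‖v‖ = 1 ∧ h = φ v}
        = φ '' (C ∩ Metric.sphere (0:Vec m) 1) := by
      ext h; constructor
      · rintro ⟨v, hv, h1, rfl⟩
        exact ⟨v, ⟨hv, by simpa [mem_sphere_zero_iff_norm] using h1⟩, rfl⟩
      · rintro ⟨v, ⟨hv, hv1⟩, rfl⟩
        exact ⟨v, hv, by simpa [mem_sphere_zero_iff_norm] using hv1, rfl⟩
    rw [heq]
    exact hsC.bddAbove_image hφcont
  have hDmem : ∀ a ∈ A, D a ≤ Hdr A f ℓ0 x p0 P lam := fun a ha => le_csSup hDbdd ⟨a, ha, rfl⟩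
  have hφmem : ∀ v ∈ C, ‖v‖ = 1 → φ v ≤ Himp C g ℓ1 x P pi lam := fun v hv h1 =>
    le_csSup hIbdd ⟨v, hv, h1, rfl⟩
  have hψdec : ∀ v ∈ C, v ≠ 0 →
      ψ v = ‖v‖ * φ (‖v‖⁻¹ • v) ∧ (‖v‖⁻¹ • v) ∈ C ∧ ‖(‖v‖⁻¹ • v)‖ = 1 := by
    intro v hv hne
    have hnorm : 0 < ‖v‖ := norm_pos_iff.mpr hne
    have hmemC : (‖v‖⁻¹ • v) ∈ C := hcone (inv_pos.mpr hnorm) hv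
    have hone : ‖(‖v‖⁻¹ • v)‖ = 1 := norm_smul_inv_norm hne
    have heq : v = ‖v‖ • (‖v‖⁻¹ • v) := (smul_inv_smul₀ hnorm.ne' v).symm
    refine ⟨?_, hmemC, hone⟩
    have hφψ : ψ (‖v‖⁻¹ • v) = φ (‖v‖⁻¹ • v) := by
      simp only [hψdef, hφdef, hone, mul_one]
    calc ψ v = ψ (‖v‖ • (‖v‖⁻¹ • v)) := by rw [← heq]
      _ = ‖v‖ * ψ (‖v‖⁻¹ • v) := hψsc _ hnorm _
      _ = ‖v‖ * φ (‖v‖⁻¹ • v) := by rw [hφψ]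
  set M : ℝ := max (Hdr A f ℓ0 x p0 P lam) (Himp C g ℓ1 x P pi lam) with hMdef
  have hpb : ∀ h ∈ {h : ℝ | ∃ (w0' : ℝ) (w' : Vec m) (a' : Vec q),
      0 ≤ w0' ∧ w' ∈ C ∧ w0' + ‖w'‖ = 1 ∧ a' ∈ A ∧
      h = Ham f g ℓ0 ℓhat1 x p0 P pi lam w0' w' a'}, h ≤ M := by
    rintro h ⟨w0', w', a', h0, hC', hs', hA', rfl⟩
    rw [hamC w0' w' a' h0 hC']
    rcases eq_or_ne w' 0 with h00 | hne
    · have hw0'1 : w0' = 1 := by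
        have := hs'; rw [h00, norm_zero, add_zero] at this; exact this
      rw [h00, hψ0, hw0'1, one_mul, add_zero]
      exact le_trans (hDmem a' hA') (le_max_left _ _)
    · obtain ⟨hψeq, hmemC, hone⟩ := hψdec w' hC' hne
      have h1 : D a' ≤ M := le_trans (hDmem a' hA') (le_max_left _ _)
      have h2 : φ (‖w'‖⁻¹ • w') ≤ M := le_trans (hφmem _ hmemC hone) (le_max_right _ _)
      rw [hψeq]
      calc w0' * D a' + ‖w'‖ * φ (‖w'‖⁻¹ • w')
          ≤ w0' * M + ‖w'‖ * M :=
            add_le_add (mul_le_mul_of_nonneg_left h1 h0)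
              (mul_le_mul_of_nonneg_left h2 (norm_nonneg _))
        _ = (w0' + ‖w'‖) * M := by ring
        _ = M := by rw [hs', one_mul]
  have hBne : Set.Nonempty {h : ℝ | ∃ (w0' : ℝ) (w' : Vec m) (a' : Vec q),
      0 ≤ w0' ∧ w' ∈ C ∧ w0' + ‖w'‖ = 1 ∧ a' ∈ A ∧
      h = Ham f g ℓ0 ℓhat1 x p0 P pi lam w0' w' a'} :=
    ⟨_, w0v, wv, av, hw0, hwC, hsum, haA, rfl⟩
  have hBbdd : BddAbove {h : ℝ | ∃ (w0' : ℝ) (w' : Vec m) (a' : Vec q),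
      0 ≤ w0' ∧ w' ∈ C ∧ w0' + ‖w'‖ = 1 ∧ a' ∈ A ∧
      h = Ham f g ℓ0 ℓhat1 x p0 P pi lam w0' w' a'} := ⟨M, hpb⟩
  have hble : bigH C A f g ℓ0 ℓhat1 x p0 P pi lam ≤ M := csSup_le hBne hpb
  have hBmem : ∀ (w0' : ℝ) (w' : Vec m) (a' : Vec q), 0 ≤ w0' → w' ∈ C → w0' + ‖w'‖ = 1 →
      a' ∈ A → Ham f g ℓ0 ℓhat1 x p0 P pi lam w0' w' a' ≤ bigH C A f g ℓ0 ℓhat1 x p0 P pi lam :=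
    fun w0' w' a' h0 hC' hs' hA' => le_csSup hBbdd ⟨w0', w', a', h0, hC', hs', hA', rfl⟩
  have hDr0 : Hdr A f ℓ0 x p0 P lam ≤ 0 := by
    refine le_trans (csSup_le ⟨D av, av, haA, rfl⟩ ?_) hzero.le
    rintro h ⟨a, ha, rfl⟩
    have := hBmem 1 0 a zero_le_one h0C (by simp) ha
    rwa [hamC 1 0 a zero_le_one h0C, hψ0, one_mul, add_zero] at this
  have hImp0 : Himp C g ℓ1 x P pi lam ≤ 0 := by
    rcases Set.eq_empty_or_nonempty
      {h : ℝ | ∃ v : Vec m, v ∈ C ∧ ‖v‖ = 1 ∧ h = φ v} with hE | hNe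
    · have : Himp C g ℓ1 x P pi lam = sSup (∅ : Set ℝ) := by rw [← hE]; rfl
      rw [this, Real.sSup_empty]
    · refine le_trans (csSup_le hNe ?_) hzero.le
      rintro h ⟨v, hv, h1, rfl⟩
      have hmem := hBmem 0 v av le_rfl hv (by rw [h1, zero_add]) haA
      have heq : Ham f g ℓ0 ℓhat1 x p0 P pi lam 0 v av = φ v := by
        rw [hamC 0 v av le_rfl hv, zero_mul, zero_add]
        simp only [hψdef, hφdef, h1, mul_one]
      rwa [heq] at hmem
  have hmax0 : M = 0 := le_antisymm (max_le hDr0 hImp0) (hzero ▸ hble)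
  have hHam0 : w0v * D av + ψ wv = 0 := by
    rw [← hamC w0v wv av hw0 hwC, hmax, hzero]
  have hDav_le : D av ≤ 0 := (hDmem av haA).trans hDr0
  have hterm1 : w0v * D av ≤ 0 := by
    calc w0v * D av ≤ w0v * 0 := mul_le_mul_of_nonneg_left hDav_le hw0
      _ = 0 := mul_zero _
  have hterm2 : ψ wv ≤ 0 := by
    rcases eq_or_ne wv 0 with h00 | hne
    · rw [h00, hψ0]
    · obtain ⟨hψeq, hmemC, hone⟩ := hψdec wv hwC hne
      rw [hψeq]
      calc ‖wv‖ * φ (‖wv‖⁻¹ • wv) ≤ ‖wv‖ * 0 :=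
          mul_le_mul_of_nonneg_left ((hφmem _ hmemC hone).trans hImp0) (norm_nonneg _)
        _ = 0 := mul_zero _
  have hT1 : w0v * D av = 0 := by linarith
  have hT2 : ψ wv = 0 := by linarith
  refine ⟨hmax, hzero.trans hmax0.symm, hzero, hT1, hT2, ?_, ?_⟩
  · intro hdrneg
    have hDav : D av < 0 := lt_of_le_of_lt (hDmem av haA) hdrneg
    have hw00 : w0v = 0 := by
      rcases mul_eq_zero.mp hT1 with h | h
      · exact h
      · exact absurd h hDav.ne
    have hwn : ‖wv‖ = 1 := by rw [hw00, zero_add] at hsum; exact hsum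
    have hφwv : φ wv = 0 := by
      have h : ψ wv = φ wv := by simp only [hψdef, hφdef, hwn, mul_one]
      rw [← h]; exact hT2
    have hle := hφmem wv hwC hwn
    have hImpEq : Himp C g ℓ1 x P pi lam = 0 :=
      le_antisymm hImp0 (hφwv ▸ hle)
    exact ⟨hw00, hφwv.trans hImpEq.symm, hImpEq⟩
  · intro himpneg
    have hwv0 : wv = 0 := by
      by_contra hne
      obtain ⟨hψeq, hmemC, hone⟩ := hψdec wv hwC hne
      have h1 : φ (‖wv‖⁻¹ • wv) < 0 := lt_of_le_of_lt (hφmem _ hmemC hone) himpneg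
      have h2 : (0:ℝ) < ‖wv‖ := norm_pos_iff.mpr hne
      have h3 := mul_neg_of_pos_of_neg h2 h1
      rw [hψeq] at hT2
      exact h3.ne hT2
    have hw01 : w0v = 1 := by
      rw [hwv0, norm_zero, add_zero] at hsum; exact hsum
    have hDav0 : D av = 0 := by rw [hw01, one_mul] at hT1; exact hT1
    have hHdr0 : Hdr A f ℓ0 x p0 P lam = 0 :=
      le_antisymm hDr0 (hDav0 ▸ hDmem av haA)
    exact ⟨hwv0, hDav0.trans hHdr0.symm, hHdr0⟩

end AuxKey

/-- Assume `ℓ₁(x,·)` is positively 1-homogeneous, so that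
`ℓᵉ(x,w⁰,w,a) = ℓ₀(x,a)w⁰ + ℓ₁(x,w)`.  For a canonical extremal with multiplier
`(p₀,p,π,λ)` there is a null set `𝒩 ⊆ [0,S̄]` outside of which the stated identities
and the alternatives (i), (ii) hold. -/
theorem canonical_extremal_drift_impulse_hamiltonians
    {n m q : ℕ} (C : Set (Vec m)) (A : Set (Vec q))
    (f : Vec n → Vec q → Vec n) (g : Fin m → Vec n → Vec n) (xck : Vec n)
    (Tgt : Set (ℝ × Vec n)) (K : EReal) (Ψ : ℝ → Vec n → ℝ)
    (ℓ0 : Vec n → Vec q → ℝ) (ℓ1 : Vec n → Vec m → ℝ) (ℓhat1 : Vec n → ℝ → Vec m → ℝ)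
    (hSets : HpSets C A Tgt K) (hReg : HpReg C A f g ℓ0 ℓhat1 Ψ)
    (hrec : IsRecessionOf C ℓhat1 ℓ1)
    -- positive 1-homogeneity of ℓ₁(x,·) and the ensuing form of ℓᵉ
    (hhom : ∀ (x : Vec n) (r : ℝ), 0 < r → ∀ w : Vec m, ℓ1 x (r • w) = r * ℓ1 x w)
    (hform : ∀ (x : Vec n) (w0 : ℝ), 0 ≤ w0 → ∀ w ∈ C, ℓhat1 x w0 w = ℓ1 x w)
    -- the canonical extremal and its multiplier
    (S : ℝ) (w0 : ℝ → ℝ) (w : ℝ → Vec m) (α : ℝ → Vec q)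
    (y0 : ℝ → ℝ) (y : ℝ → Vec n) (β : ℝ → ℝ)
    (hproc : IsSTProcess C A f g xck S w0 w α y0 y β)
    (hcan : STCanonical S w0 w)
    (Γ : Set (ℝ × Vec n)) (hΓ : IsBoltyanskiCone Tgt (y0 S, y S) Γ)
    (p0 : ℝ) (p : ℝ → Vec n) (pi lam : ℝ)
    (hFOMP : FOMP C A f g ℓ0 ℓhat1 Ψ K S w0 w α y0 y β Γ p0 p pi lam) :
    ∃ N : Set ℝ, N ⊆ Icc (0:ℝ) S ∧ volume N = 0 ∧
      ∀ s ∈ Icc (0:ℝ) S \ N,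
        (Ham f g ℓ0 ℓhat1 (y s) p0 (p s) pi lam (w0 s) (w s) (α s)
            = bigH C A f g ℓ0 ℓhat1 (y s) p0 (p s) pi lam) ∧
        (bigH C A f g ℓ0 ℓhat1 (y s) p0 (p s) pi lam
            = max (Hdr A f ℓ0 (y s) p0 (p s) lam) (Himp C g ℓ1 (y s) (p s) pi lam)) ∧
        (bigH C A f g ℓ0 ℓhat1 (y s) p0 (p s) pi lam = 0) ∧
        (w0 s * (p0 + (inner ℝ (p s) (f (y s) (α s)) : ℝ) - lam * ℓ0 (y s) (α s)) = 0) ∧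
        ((inner ℝ (p s) (∑ i, w s i • g i (y s)) : ℝ) + pi * ‖w s‖
            - lam * ℓ1 (y s) (w s) = 0) ∧
        (Hdr A f ℓ0 (y s) p0 (p s) lam < 0 →
          w0 s = 0 ∧
          (inner ℝ (p s) (∑ i, w s i • g i (y s)) : ℝ) + pi - lam * ℓ1 (y s) (w s)
            = Himp C g ℓ1 (y s) (p s) pi lam ∧
          Himp C g ℓ1 (y s) (p s) pi lam = 0) ∧
        (Himp C g ℓ1 (y s) (p s) pi lam < 0 →
          w s = 0 ∧
          p0 + (inner ℝ (p s) (f (y s) (α s)) : ℝ) - lam * ℓ0 (y s) (α s)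
            = Hdr A f ℓ0 (y s) p0 (p s) lam ∧
          Hdr A f ℓ0 (y s) p0 (p s) lam = 0) := by
  obtain ⟨hpi, hlam, _h3, _h4, _h5, _h6, _h7, hiv, hv⟩ := hFOMP
  have hμne : (volume.restrict (Icc (0:ℝ) S)) ≠ 0 := by
    intro h
    have h2 : (volume.restrict (Icc (0:ℝ) S)) univ = 0 := by rw [h]; simp
    rw [Measure.restrict_apply_univ, Real.volume_Icc] at h2
    have hS := hproc.hS
    rw [ENNReal.ofReal_eq_zero] at h2
    linarith
  have : (ae (volume.restrict (Icc (0:ℝ) S))).NeBot := ae_neBot.mpr hμne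
  obtain ⟨s₀, hs₀⟩ := hproc.mem_ae.exists
  have h0C : (0 : Vec m) ∈ C := by
    have hwpt : w s₀ ∈ C := hs₀.2.1
    have htend : Tendsto (fun c : ℝ => c • w s₀) (𝓝[>] (0:ℝ)) (𝓝 0) := by
      have hc : Continuous fun c : ℝ => c • w s₀ := continuous_id.smul continuous_const
      have h := hc.tendsto 0
      rw [zero_smul] at h
      exact h.mono_left nhdsWithin_le_nhds
    exact hSets.hC_closed.mem_of_tendsto htend
      (eventually_nhdsWithin_of_forall fun c hc => hSets.hC_cone hc hwpt)
  have hae : ∀ᵐ s ∂(volume.restrict (Icc (0:ℝ) S)),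
      (0 ≤ w0 s ∧ w s ∈ C ∧ α s ∈ A) ∧ w0 s + ‖w s‖ = 1 ∧
      Ham f g ℓ0 ℓhat1 (y s) p0 (p s) pi lam (w0 s) (w s) (α s)
        = bigH C A f g ℓ0 ℓhat1 (y s) p0 (p s) pi lam :=
    hproc.mem_ae.and (hcan.and hiv)
  refine ⟨{s : ℝ | ¬ ((0 ≤ w0 s ∧ w s ∈ C ∧ α s ∈ A) ∧ w0 s + ‖w s‖ = 1 ∧
      Ham f g ℓ0 ℓhat1 (y s) p0 (p s) pi lam (w0 s) (w s) (α s)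
        = bigH C A f g ℓ0 ℓhat1 (y s) p0 (p s) pi lam)} ∩ Icc (0:ℝ) S,
    inter_subset_right, ?_, ?_⟩
  · have h := ae_iff.mp hae
    rwa [Measure.restrict_apply' measurableSet_Icc] at h
  · rintro s ⟨hsI, hsN⟩
    have hP : (0 ≤ w0 s ∧ w s ∈ C ∧ α s ∈ A) ∧ w0 s + ‖w s‖ = 1 ∧
        Ham f g ℓ0 ℓhat1 (y s) p0 (p s) pi lam (w0 s) (w s) (α s)
          = bigH C A f g ℓ0 ℓhat1 (y s) p0 (p s) pi lam := by
      by_contra h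
      exact hsN ⟨h, hsI⟩
    obtain ⟨⟨h1, h2, h3⟩, h4, h5⟩ := hP
    exact key_lemma C A f g ℓ0 ℓ1 ℓhat1 hSets.hA hSets.hC_closed h0C hSets.hC_cone
      hReg.hf_cont hReg.hl0_cont hReg.hl1_cont hhom hform (y s) p0 (p s) pi lam
      (w0 s) (w s) (α s) h1 h2 h4 h3 h5 (hv s hsI)
end
end

section
/- Let (S̄, w̄⁰, w̄, ᾱ, ȳ⁰, ȳ, β̄) be a canonical extremal for the space-time problem with multiplier (p₀, p, π, λ). If π = 0 and λ·ℓᵉ(ȳ(s), 0, ±𝐞ᵢ, a) = 0 for all s ∈ [0,S̄] and all i = 1,…,m₁ (these quantities not depending on a ∈ A), then p(s)·gᵢ(ȳ(s)) = 0 for all s ∈ [0,S̄] and all i = 1,…,m₁. -/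
open MeasureTheory Set Filter Asymptotics Topology
noncomputable section

variable {n m q : ℕ}

/-- The cone `𝒞 ⊆ ℝ^{m₁+m₂}` splits as `𝒞₁ × 𝒞₂`, where `𝒞₁ ⊆ ℝ^{m₁}` is a closed
cone containing the coordinate lines `ℝ𝐞ᵢ` and `𝒞₂ ⊆ ℝ^{m₂}` is a closed cone
containing no straight lines. -/
def SplitCone (m₁ m₂ : ℕ) (C : Set (Vec (m₁ + m₂))) : Prop :=
  ∃ (C1 : Set (Vec m₁)) (C2 : Set (Vec m₂)),
    IsClosed C1 ∧ (∀ ⦃r : ℝ⦄, 0 < r → ∀ ⦃x⦄, x ∈ C1 → r • x ∈ C1) ∧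
    (∀ (i : Fin m₁) (r : ℝ), (r • EuclideanSpace.single i (1:ℝ)) ∈ C1) ∧
    IsClosed C2 ∧ (∀ ⦃r : ℝ⦄, 0 < r → ∀ ⦃x⦄, x ∈ C2 → r • x ∈ C2) ∧
    (∀ v : Vec m₂, (∀ r : ℝ, r • v ∈ C2) → v = 0) ∧
    C = { w : Vec (m₁ + m₂) |
      (WithLp.toLp 2 (fun i => w (Fin.castAdd m₂ i)) : Vec m₁) ∈ C1 ∧
      (WithLp.toLp 2 (fun i => w (Fin.natAdd m₁ i)) : Vec m₂) ∈ C2 }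

/-- Let `(S̄, w̄⁰, w̄, ᾱ, ȳ⁰, ȳ, β̄)` be a canonical extremal with
multiplier `(p₀, p, π, λ)`.  If `π = 0` and `λ ℓᵉ(ȳ(s), 0, ±𝐞ᵢ, a) = 0` for all
`s ∈ [0,S̄]` and `i = 1,…,m₁`, then `p(s)·gᵢ(ȳ(s)) = 0` for all `s ∈ [0,S̄]` and
`i = 1,…,m₁`. -/
theorem extremal_p_dot_g_eq_zero
    {n m₁ m₂ q : ℕ} (C : Set (Vec (m₁ + m₂))) (A : Set (Vec q))
    (f : Vec n → Vec q → Vec n) (g : Fin (m₁ + m₂) → Vec n → Vec n) (xck : Vec n)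
    (Tgt : Set (ℝ × Vec n)) (K : EReal) (Ψ : ℝ → Vec n → ℝ)
    (ℓ0 : Vec n → Vec q → ℝ) (ℓ1 : Vec n → Vec (m₁ + m₂) → ℝ)
    (ℓhat1 : Vec n → ℝ → Vec (m₁ + m₂) → ℝ)
    (hSets : HpSets C A Tgt K) (hReg : HpReg C A f g ℓ0 ℓhat1 Ψ)
    (hrec : IsRecessionOf C ℓhat1 ℓ1) (hsplit : SplitCone m₁ m₂ C)
    -- the canonical extremal and its multiplier
    (S : ℝ) (w0 : ℝ → ℝ) (w : ℝ → Vec (m₁ + m₂)) (α : ℝ → Vec q)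
    (y0 : ℝ → ℝ) (y : ℝ → Vec n) (β : ℝ → ℝ)
    (hproc : IsSTProcess C A f g xck S w0 w α y0 y β)
    (hcan : STCanonical S w0 w)
    (Γ : Set (ℝ × Vec n)) (hΓ : IsBoltyanskiCone Tgt (y0 S, y S) Γ)
    (p0 : ℝ) (p : ℝ → Vec n) (pi lam : ℝ)
    (hFOMP : FOMP C A f g ℓ0 ℓhat1 Ψ K S w0 w α y0 y β Γ p0 p pi lam)
    -- the extra hypotheses
    (hpi : pi = 0)
    (hlam : ∀ s ∈ Icc (0:ℝ) S, ∀ i : Fin m₁, ∀ a ∈ A,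
      lam * extL ℓ0 ℓhat1 (y s) 0 (EuclideanSpace.single (Fin.castAdd m₂ i) (1:ℝ)) a = 0 ∧
      lam * extL ℓ0 ℓhat1 (y s) 0 (-EuclideanSpace.single (Fin.castAdd m₂ i) (1:ℝ)) a = 0) :
    ∀ s ∈ Icc (0:ℝ) S, ∀ i : Fin m₁,
      (inner ℝ (p s) (g (Fin.castAdd m₂ i) (y s)) : ℝ) = 0 := by
  intro s hs i
  classical
  obtain ⟨C1, C2, hC1c, hC1cone, hC1lines, hC2c, hC2cone, hC2nl, hCeq⟩ := hsplit
  -- nonemptiness of A and 0 ∈ C2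
  have hμ : (volume.restrict (Icc (0:ℝ) S)) ≠ 0 := by
    intro h
    have h2 : (volume.restrict (Icc (0:ℝ) S)) (Icc (0:ℝ) S) = 0 := by rw [h]; simp
    rw [Measure.restrict_apply_self, Real.volume_Icc] at h2
    have := hproc.hS
    simp only [ENNReal.ofReal_eq_zero] at h2
    linarith
  haveI : (ae (volume.restrict (Icc (0:ℝ) S))).NeBot := MeasureTheory.ae_neBot.2 hμ
  obtain ⟨t, ht0, htC, htA⟩ := hproc.mem_ae.exists
  have ha0 : α t ∈ A := htA
  have hc2 : (WithLp.toLp 2 (fun j => w t (Fin.natAdd m₁ j)) : Vec m₂) ∈ C2 := by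
    have h := htC; rw [hCeq] at h; exact h.2
  have h0C2 : (0 : Vec m₂) ∈ C2 := by
    have hten : Tendsto (fun r : ℝ => r • (WithLp.toLp 2 (fun j => w t (Fin.natAdd m₁ j)) : Vec m₂))
        (𝓝[>] (0:ℝ)) (𝓝 0) := by
      have h1 : Tendsto (fun r : ℝ => r • (WithLp.toLp 2 (fun j => w t (Fin.natAdd m₁ j)) : Vec m₂))
          (𝓝 (0:ℝ)) (𝓝 ((0:ℝ) • (WithLp.toLp 2 (fun j => w t (Fin.natAdd m₁ j)) : Vec m₂))) :=
        (continuous_id.smul continuous_const).tendsto 0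
      simpa using h1.mono_left nhdsWithin_le_nhds
    exact hC2c.mem_of_tendsto hten
      (eventually_nhdsWithin_of_forall fun r hr => hC2cone hr hc2)
  -- ±eᵢ ∈ C
  have memC : ∀ r : ℝ, r • EuclideanSpace.single (Fin.castAdd m₂ i) (1:ℝ) ∈ C := by
    intro r
    rw [hCeq]
    constructor
    · have h1 : (WithLp.toLp 2 (fun j => (r • EuclideanSpace.single (Fin.castAdd m₂ i) (1:ℝ))
          (Fin.castAdd m₂ j)) : Vec m₁) = r • EuclideanSpace.single i (1:ℝ) := by
        ext j
        simp [EuclideanSpace.single_apply, Fin.ext_iff]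
      rw [h1]; exact hC1lines i r
    · have h1 : (WithLp.toLp 2 (fun j => (r • EuclideanSpace.single (Fin.castAdd m₂ i) (1:ℝ))
          (Fin.natAdd m₁ j)) : Vec m₂) = 0 := by
        ext j
        have hne : Fin.natAdd m₁ j ≠ Fin.castAdd m₂ i := by
          simp [Fin.ext_iff]; omega
        simp [EuclideanSpace.single_apply, hne]
      rw [h1]; exact h0C2
  -- auxiliary computations
  have hFe : ∀ r : ℝ, Fe f g (y s) 0 (r • EuclideanSpace.single (Fin.castAdd m₂ i) (1:ℝ)) (α t)
      = r • g (Fin.castAdd m₂ i) (y s) := by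
    intro r
    simp only [Fe, zero_smul, zero_add, PiLp.smul_apply, EuclideanSpace.single_apply,
      smul_eq_mul, mul_ite, mul_one, mul_zero, ite_smul, zero_smul,
      Finset.sum_ite_eq', Finset.mem_univ, if_true]
  -- the Hamiltonian values at (0, ±eᵢ, α t)
  have hHam1 : Ham f g ℓ0 ℓhat1 (y s) p0 (p s) pi lam 0
      (EuclideanSpace.single (Fin.castAdd m₂ i) (1:ℝ)) (α t)
      = (inner ℝ (p s) (g (Fin.castAdd m₂ i) (y s)) : ℝ) := by
    have h1 := hFe 1
    rw [one_smul] at h1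
    rw [Ham, h1, hpi, (hlam s hs i (α t) ha0).1]
    simp
  have hHam2 : Ham f g ℓ0 ℓhat1 (y s) p0 (p s) pi lam 0
      (-EuclideanSpace.single (Fin.castAdd m₂ i) (1:ℝ)) (α t)
      = -(inner ℝ (p s) (g (Fin.castAdd m₂ i) (y s)) : ℝ) := by
    have h1 := hFe (-1)
    rw [neg_one_smul] at h1
    rw [Ham, h1, hpi, (hlam s hs i (α t) ha0).2]
    simp [inner_neg_right]
  -- compactness of the constraint set
  have hTclosed : IsClosed {z : ℝ × Vec (m₁ + m₂) × Vec q |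
      0 ≤ z.1 ∧ z.2.1 ∈ C ∧ z.1 + ‖z.2.1‖ = 1 ∧ z.2.2 ∈ A} := by
    have h1 : IsClosed {z : ℝ × Vec (m₁ + m₂) × Vec q | 0 ≤ z.1} :=
      isClosed_le continuous_const continuous_fst
    have h2 : IsClosed {z : ℝ × Vec (m₁ + m₂) × Vec q | z.2.1 ∈ C} :=
      hSets.hC_closed.preimage (continuous_fst.comp continuous_snd)
    have h3 : IsClosed {z : ℝ × Vec (m₁ + m₂) × Vec q | z.1 + ‖z.2.1‖ = 1} :=
      isClosed_eq (continuous_fst.add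
        (continuous_norm.comp (continuous_fst.comp continuous_snd))) continuous_const
    have h4 : IsClosed {z : ℝ × Vec (m₁ + m₂) × Vec q | z.2.2 ∈ A} :=
      hSets.hA.isClosed.preimage (continuous_snd.comp continuous_snd)
    have heq : {z : ℝ × Vec (m₁ + m₂) × Vec q |
        0 ≤ z.1 ∧ z.2.1 ∈ C ∧ z.1 + ‖z.2.1‖ = 1 ∧ z.2.2 ∈ A}
        = {z : ℝ × Vec (m₁ + m₂) × Vec q | 0 ≤ z.1} ∩
          ({z | z.2.1 ∈ C} ∩ ({z | z.1 + ‖z.2.1‖ = 1} ∩ {z | z.2.2 ∈ A})) := by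
      ext z; simp [Set.mem_inter_iff, and_assoc]
    rw [heq]
    exact h1.inter (h2.inter (h3.inter h4))
  have hTcpt : IsCompact {z : ℝ × Vec (m₁ + m₂) × Vec q |
      0 ≤ z.1 ∧ z.2.1 ∈ C ∧ z.1 + ‖z.2.1‖ = 1 ∧ z.2.2 ∈ A} := by
    have hball : IsCompact (Metric.closedBall (0 : Vec (m₁ + m₂)) 1) :=
      isCompact_closedBall _ _
    have hbig : IsCompact ((Icc (0:ℝ) 1) ×ˢ
        ((Metric.closedBall (0 : Vec (m₁ + m₂)) 1) ×ˢ A)) :=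
      isCompact_Icc.prod (hball.prod hSets.hA)
    refine hbig.of_isClosed_subset hTclosed ?_
    rintro ⟨w0', w', a'⟩ ⟨hz0, hzC, hz1, hzA⟩
    have hn : (0:ℝ) ≤ ‖w'‖ := norm_nonneg _
    have hz1' : w0' + ‖w'‖ = 1 := hz1
    refine ⟨⟨hz0, by linarith⟩, ?_, hzA⟩
    show w' ∈ Metric.closedBall (0 : Vec (m₁ + m₂)) 1
    rw [Metric.mem_closedBall, dist_zero_right]
    linarith
  -- continuity of the Hamiltonian in (w0, w, a)
  have hΦcont : ContinuousOn (fun z : ℝ × Vec (m₁ + m₂) × Vec q =>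
      Ham f g ℓ0 ℓhat1 (y s) p0 (p s) pi lam z.1 z.2.1 z.2.2)
      {z : ℝ × Vec (m₁ + m₂) × Vec q |
        0 ≤ z.1 ∧ z.2.1 ∈ C ∧ z.1 + ‖z.2.1‖ = 1 ∧ z.2.2 ∈ A} := by
    have cf : Continuous fun z : ℝ × Vec (m₁ + m₂) × Vec q => f (y s) z.2.2 :=
      hReg.hf_cont.comp (continuous_const.prodMk (continuous_snd.comp continuous_snd))
    have cFe : Continuous fun z : ℝ × Vec (m₁ + m₂) × Vec q =>
        Fe f g (y s) z.1 z.2.1 z.2.2 := by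
      simp only [Fe]
      refine (continuous_fst.smul cf).add ?_
      refine continuous_finset_sum _ fun j _ => Continuous.smul (f := fun z : ℝ × Vec (m₁ + m₂) × Vec q => z.2.1 j) ?_ continuous_const
      have hcj : Continuous fun z : ℝ × Vec (m₁ + m₂) × Vec q =>
          EuclideanSpace.proj j (z.2.1) :=
        (EuclideanSpace.proj j).continuous.comp (continuous_fst.comp continuous_snd)
      exact hcj
    have cinner : Continuous fun z : ℝ × Vec (m₁ + m₂) × Vec q =>
        (inner ℝ (p s) (Fe f g (y s) z.1 z.2.1 z.2.2) : ℝ) :=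
      Continuous.inner continuous_const cFe
    have c1 : Continuous fun z : ℝ × Vec (m₁ + m₂) × Vec q => p0 * z.1 :=
      continuous_const.mul continuous_fst
    have c3 : Continuous fun z : ℝ × Vec (m₁ + m₂) × Vec q => pi * ‖z.2.1‖ :=
      continuous_const.mul (continuous_norm.comp (continuous_fst.comp continuous_snd))
    have cl0 : Continuous fun z : ℝ × Vec (m₁ + m₂) × Vec q => ℓ0 (y s) z.2.2 * z.1 :=
      (hReg.hl0_cont.comp
        (continuous_const.prodMk (continuous_snd.comp continuous_snd))).mul continuous_fst
    have cl1 : ContinuousOn (fun z : ℝ × Vec (m₁ + m₂) × Vec q => ℓhat1 (y s) z.1 z.2.1)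
        {z : ℝ × Vec (m₁ + m₂) × Vec q |
          0 ≤ z.1 ∧ z.2.1 ∈ C ∧ z.1 + ‖z.2.1‖ = 1 ∧ z.2.2 ∈ A} := by
      have hcm : Continuous fun z : ℝ × Vec (m₁ + m₂) × Vec q =>
          ((y s, (z.1, z.2.1)) : Vec n × ℝ × Vec (m₁ + m₂)) :=
        continuous_const.prodMk (continuous_fst.prodMk (continuous_fst.comp continuous_snd))
      have := ContinuousOn.comp (g := fun z : Vec n × ℝ × Vec (m₁ + m₂) => ℓhat1 z.1 z.2.1 z.2.2)
        (f := fun z : ℝ × Vec (m₁ + m₂) × Vec q => ((y s, (z.1, z.2.1)) : Vec n × ℝ × Vec (m₁ + m₂)))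
        (s := {z : ℝ × Vec (m₁ + m₂) × Vec q | 0 ≤ z.1 ∧ z.2.1 ∈ C ∧ z.1 + ‖z.2.1‖ = 1 ∧ z.2.2 ∈ A})
        (t := Set.univ ×ˢ (Set.Ici (0:ℝ)) ×ˢ C)
        hReg.hl1_cont hcm.continuousOn (fun z hz => ⟨Set.mem_univ _, hz.1, hz.2.1⟩)
      exact this
    have heq : (fun z : ℝ × Vec (m₁ + m₂) × Vec q =>
        Ham f g ℓ0 ℓhat1 (y s) p0 (p s) pi lam z.1 z.2.1 z.2.2)
        = fun z => p0 * z.1 + (inner ℝ (p s) (Fe f g (y s) z.1 z.2.1 z.2.2) : ℝ)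
          + pi * ‖z.2.1‖ - lam * (ℓ0 (y s) z.2.2 * z.1 + ℓhat1 (y s) z.1 z.2.1) := by
      funext z; simp [Ham, extL]
    rw [heq]
    exact (((c1.add cinner).add c3).continuousOn).sub
      (continuousOn_const.mul (cl0.continuousOn.add cl1))
  -- the set of Hamiltonian values is bounded above
  have hset : {h : ℝ | ∃ (w0 : ℝ) (w : Vec (m₁ + m₂)) (a : Vec q),
      0 ≤ w0 ∧ w ∈ C ∧ w0 + ‖w‖ = 1 ∧ a ∈ A ∧
      h = Ham f g ℓ0 ℓhat1 (y s) p0 (p s) pi lam w0 w a}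
      = (fun z : ℝ × Vec (m₁ + m₂) × Vec q =>
          Ham f g ℓ0 ℓhat1 (y s) p0 (p s) pi lam z.1 z.2.1 z.2.2) ''
        {z : ℝ × Vec (m₁ + m₂) × Vec q |
          0 ≤ z.1 ∧ z.2.1 ∈ C ∧ z.1 + ‖z.2.1‖ = 1 ∧ z.2.2 ∈ A} := by
    ext h
    constructor
    · rintro ⟨w0', w', a', h1, h2, h3, h4, h5⟩
      exact ⟨(w0', w', a'), ⟨h1, h2, h3, h4⟩, h5.symm⟩
    · rintro ⟨⟨w0', w', a'⟩, ⟨h1, h2, h3, h4⟩, h5⟩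
      exact ⟨w0', w', a', h1, h2, h3, h4, h5.symm⟩
  have hbdd : BddAbove {h : ℝ | ∃ (w0 : ℝ) (w : Vec (m₁ + m₂)) (a : Vec q),
      0 ≤ w0 ∧ w ∈ C ∧ w0 + ‖w‖ = 1 ∧ a ∈ A ∧
      h = Ham f g ℓ0 ℓhat1 (y s) p0 (p s) pi lam w0 w a} := by
    rw [hset]
    exact (hTcpt.image_of_continuousOn hΦcont).bddAbove
  -- the Hamiltonian vanishes
  have hzero := hFOMP.2.2.2.2.2.2.2.2 s hs
  rw [bigH] at hzero
  -- membership of the two values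
  have hv1 : (inner ℝ (p s) (g (Fin.castAdd m₂ i) (y s)) : ℝ) ∈
      {h : ℝ | ∃ (w0 : ℝ) (w : Vec (m₁ + m₂)) (a : Vec q),
        0 ≤ w0 ∧ w ∈ C ∧ w0 + ‖w‖ = 1 ∧ a ∈ A ∧
        h = Ham f g ℓ0 ℓhat1 (y s) p0 (p s) pi lam w0 w a} := by
    refine ⟨0, EuclideanSpace.single (Fin.castAdd m₂ i) (1:ℝ), α t, le_refl 0,
      by simpa using memC 1, by simp [EuclideanSpace.norm_single], ha0, hHam1.symm⟩
  have hv2 : (-(inner ℝ (p s) (g (Fin.castAdd m₂ i) (y s)) : ℝ)) ∈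
      {h : ℝ | ∃ (w0 : ℝ) (w : Vec (m₁ + m₂)) (a : Vec q),
        0 ≤ w0 ∧ w ∈ C ∧ w0 + ‖w‖ = 1 ∧ a ∈ A ∧
        h = Ham f g ℓ0 ℓhat1 (y s) p0 (p s) pi lam w0 w a} := by
    refine ⟨0, -EuclideanSpace.single (Fin.castAdd m₂ i) (1:ℝ), α t, le_refl 0,
      ?_, by simp [EuclideanSpace.norm_single], ha0, hHam2.symm⟩
    have := memC (-1)
    rwa [neg_one_smul] at this
  have h1 := le_csSup hbdd hv1
  have h2 := le_csSup hbdd hv2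
  rw [hzero] at h1 h2
  linarith
end
end
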